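/- arXiv:1602.06876 — 3 statements merged into one kernel-verified Lean document; each statement's English description precedes it below -/
import Mathlib

section
/- (Push-the-button algorithm, type A.) Let G be the path graph on n vertices (vertices 0, 1, ..., n−1, with i adjacent to i+1). Then every circling on G is F-related to a circling with at most one circled vertex. -/
open Classical in
/-- The push operation `F i` at a circled vertex `i`: reverse the circling of every
vertex adjacent to `i`. -/
noncomputable def push {V : Type*} (G : SimpleGraph V) (i : V) (c : V → ZMod 2) :
    V → ZMod 2 :=
  fun j => if G.Adj i j then c j + 1 else c j

/-- A single push step between circlings: some circled vertex is pushed. -/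
def PushStep {V : Type*} (G : SimpleGraph V) (c c' : V → ZMod 2) : Prop :=
  ∃ i, c i = 1 ∧ c' = push G i c

/-- Two circlings are `F`-related if a finite sequence of push operations transforms
one into the other. -/
def FRelated {V : Type*} (G : SimpleGraph V) : (V → ZMod 2) → (V → ZMod 2) → Prop :=
  Relation.ReflTransGen (PushStep G)

section Aux

variable {n : ℕ}

local notation "G" => SimpleGraph.pathGraph n

lemma zmod2_eq_zero (x : ZMod 2) (h : x ≠ 1) : x = 0 := by revert h; revert x; decide

lemma pushStep_rel (c : Fin n → ZMod 2) (i : Fin n) (h : c i = 1) :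
    FRelated G c (push G i c) :=
  Relation.ReflTransGen.single ⟨i, h, rfl⟩

lemma push_path_eval (i : ℕ) (hi : i < n) (c : Fin n → ZMod 2) (v : Fin n) :
    push G ⟨i, hi⟩ c v = if i + 1 = v.val ∨ v.val + 1 = i then c v + 1 else c v := by
  simp only [push, SimpleGraph.pathGraph_adj]

/-- Walk an adjacent circled pair at `(q, q+1)` rightwards until it collides with the
circled vertex at `t`, leaving a single circled vertex at `t-1`. -/
lemma walk_collide : ∀ (d : ℕ) (c : Fin n → ZMod 2) (q t : ℕ), t < n → t = q + 2 + d →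
    (∀ v : Fin n, v.val = q → c v = 1) →
    (∀ v : Fin n, v.val = q + 1 → c v = 1) →
    (∀ v : Fin n, v.val = t → c v = 1) →
    (∀ v : Fin n, q + 1 < v.val → v.val < t → c v = 0) →
    FRelated G c
      (fun v => if v.val = t - 1 then 1 else if q ≤ v.val ∧ v.val ≤ t then 0 else c v) := by
  intro d
  induction d with
  | zero =>
    intro c q t ht hqt hq hq1 hts hz
    have hq1n : q + 1 < n := by omega
    have hrel := pushStep_rel c ⟨q + 1, hq1n⟩ (hq1 _ rfl)
    have hfe : push G ⟨q + 1, hq1n⟩ c =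
        (fun v => if v.val = t - 1 then 1 else if q ≤ v.val ∧ v.val ≤ t then 0 else c v) := by
      funext v
      rw [push_path_eval]
      by_cases h1 : v.val = q
      · rw [if_pos (by omega), hq v h1, if_neg (by omega), if_pos (by omega)]; decide
      · by_cases h2 : v.val = q + 1
        · rw [if_neg (by omega), hq1 v h2, if_pos (by omega)]
        · by_cases h3 : v.val = q + 2
          · rw [if_pos (by omega), hts v (by omega), if_neg (by omega), if_pos (by omega)]
            decide
          · rw [if_neg (by omega), if_neg (by omega), if_neg (by omega)]
    rw [hfe] at hrel
    exact hrel
  | succ d ih =>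
    intro c q t ht hqt hq hq1 hts hz
    have hq1n : q + 1 < n := by omega
    set c1 := push G ⟨q + 1, hq1n⟩ c with hc1def
    have hrel1 : FRelated G c c1 := pushStep_rel c ⟨q + 1, hq1n⟩ (hq1 _ rfl)
    have e1 : ∀ v : Fin n, v.val = q + 1 → c1 v = 1 := by
      intro v hv
      rw [hc1def, push_path_eval, if_neg (by omega)]
      exact hq1 v hv
    have e2 : ∀ v : Fin n, v.val = q + 1 + 1 → c1 v = 1 := by
      intro v hv
      rw [hc1def, push_path_eval, if_pos (by omega), hz v (by omega) (by omega)]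
      decide
    have e3 : ∀ v : Fin n, v.val = t → c1 v = 1 := by
      intro v hv
      rw [hc1def, push_path_eval, if_neg (by omega)]
      exact hts v hv
    have e4 : ∀ v : Fin n, q + 1 + 1 < v.val → v.val < t → c1 v = 0 := by
      intro v hv1 hv2
      rw [hc1def, push_path_eval, if_neg (by omega)]
      exact hz v (by omega) hv2
    have hrel2 := ih c1 (q + 1) t ht (by omega) e1 e2 e3 e4
    have hfe : (fun v : Fin n => if v.val = t - 1 then 1
          else if q + 1 ≤ v.val ∧ v.val ≤ t then 0 else c1 v) =
        (fun v : Fin n => if v.val = t - 1 then 1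
          else if q ≤ v.val ∧ v.val ≤ t then 0 else c v) := by
      funext v
      by_cases h1 : v.val = t - 1
      · rw [if_pos h1, if_pos h1]
      · rw [if_neg h1, if_neg h1]
        by_cases h2 : v.val = q
        · rw [if_neg (by omega), if_pos (by omega), hc1def, push_path_eval,
            if_pos (by omega), hq v h2]
          decide
        · by_cases h3 : q + 1 ≤ v.val ∧ v.val ≤ t
          · rw [if_pos h3, if_pos (by omega)]
          · rw [if_neg h3, if_neg (by omega), hc1def, push_path_eval, if_neg (by omega)]
    rw [hfe] at hrel2
    exact hrel1.trans hrel2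

/-- Walk an adjacent circled pair at `(q, q+1)` rightwards to the end of the path,
leaving a single circled vertex at `n-1`. -/
lemma walk_border : ∀ (d : ℕ) (c : Fin n → ZMod 2) (q : ℕ), q + 1 < n → n = q + 2 + d →
    (∀ v : Fin n, v.val = q → c v = 1) →
    (∀ v : Fin n, v.val = q + 1 → c v = 1) →
    (∀ v : Fin n, q + 1 < v.val → c v = 0) →
    FRelated G c
      (fun v => if v.val = n - 1 then 1 else if q ≤ v.val then 0 else c v) := by
  intro d
  induction d with
  | zero =>
    intro c q hq1n hn hq hq1 hz
    have hrel := pushStep_rel c ⟨q + 1, hq1n⟩ (hq1 _ rfl)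
    have hfe : push G ⟨q + 1, hq1n⟩ c =
        (fun v => if v.val = n - 1 then 1 else if q ≤ v.val then 0 else c v) := by
      funext v
      have hvn := v.isLt
      rw [push_path_eval]
      by_cases h1 : v.val = q
      · rw [if_pos (by omega), hq v h1, if_neg (by omega), if_pos (by omega)]; decide
      · by_cases h2 : v.val = q + 1
        · rw [if_neg (by omega), hq1 v h2, if_pos (by omega)]
        · rw [if_neg (by omega), if_neg (by omega), if_neg (by omega)]
    rw [hfe] at hrel
    exact hrel
  | succ d ih =>
    intro c q hq1n hn hq hq1 hz
    set c1 := push G ⟨q + 1, hq1n⟩ c with hc1def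
    have hrel1 : FRelated G c c1 := pushStep_rel c ⟨q + 1, hq1n⟩ (hq1 _ rfl)
    have e1 : ∀ v : Fin n, v.val = q + 1 → c1 v = 1 := by
      intro v hv
      rw [hc1def, push_path_eval, if_neg (by omega)]
      exact hq1 v hv
    have e2 : ∀ v : Fin n, v.val = q + 1 + 1 → c1 v = 1 := by
      intro v hv
      rw [hc1def, push_path_eval, if_pos (by omega), hz v (by omega)]
      decide
    have e4 : ∀ v : Fin n, q + 1 + 1 < v.val → c1 v = 0 := by
      intro v hv1
      rw [hc1def, push_path_eval, if_neg (by omega)]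
      exact hz v (by omega)
    have hrel2 := ih c1 (q + 1) (by omega) (by omega) e1 e2 e4
    have hfe : (fun v : Fin n => if v.val = n - 1 then 1
          else if q + 1 ≤ v.val then 0 else c1 v) =
        (fun v : Fin n => if v.val = n - 1 then 1
          else if q ≤ v.val then 0 else c v) := by
      funext v
      by_cases h1 : v.val = n - 1
      · rw [if_pos h1, if_pos h1]
      · rw [if_neg h1, if_neg h1]
        by_cases h2 : v.val = q
        · rw [if_neg (by omega), if_pos (by omega), hc1def, push_path_eval,
            if_pos (by omega), hq v h2]
          decide
        · by_cases h3 : q + 1 ≤ v.val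
          · rw [if_pos h3, if_pos (by omega)]
          · rw [if_neg h3, if_neg (by omega), hc1def, push_path_eval, if_neg (by omega)]
    rw [hfe] at hrel2
    exact hrel1.trans hrel2

lemma card_lt {s t : Set (Fin n)} {w x y : Fin n} (hsub : s ⊆ insert w (t \ {x, y}))
    (hx : x ∈ t) (hy : y ∈ t) (hxy : x ≠ y) : s.ncard < t.ncard := by
  have hpair : ({x, y} : Set (Fin n)) ⊆ t := by
    intro z hz
    rcases hz with h | h
    · rwa [h]
    · rw [Set.mem_singleton_iff] at h; rwa [h]
  have h1 : s.ncard ≤ (insert w (t \ {x, y})).ncard :=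
    Set.ncard_le_ncard hsub (Set.toFinite _)
  have h2 : (insert w (t \ {x, y})).ncard ≤ (t \ {x, y}).ncard + 1 := Set.ncard_insert_le _ _
  have h3 : (t \ ({x, y} : Set (Fin n))).ncard = t.ncard - 2 := by
    rw [Set.ncard_diff hpair (Set.toFinite _), Set.ncard_pair hxy]
  have h4 : 2 ≤ t.ncard := by
    rw [← Set.ncard_pair hxy]
    exact Set.ncard_le_ncard hpair (Set.toFinite _)
  omega

lemma card_le {s t : Set (Fin n)} {w w' x y : Fin n}
    (hsub : s ⊆ insert w (insert w' (t \ {x, y})))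
    (hx : x ∈ t) (hy : y ∈ t) (hxy : x ≠ y) : s.ncard ≤ t.ncard := by
  have hpair : ({x, y} : Set (Fin n)) ⊆ t := by
    intro z hz
    rcases hz with h | h
    · rwa [h]
    · rw [Set.mem_singleton_iff] at h; rwa [h]
  have h1 : s.ncard ≤ (insert w (insert w' (t \ {x, y}))).ncard :=
    Set.ncard_le_ncard hsub (Set.toFinite _)
  have h2 : (insert w (insert w' (t \ {x, y}))).ncard ≤ (insert w' (t \ {x, y})).ncard + 1 :=
    Set.ncard_insert_le _ _
  have h2' : (insert w' (t \ {x, y})).ncard ≤ (t \ {x, y}).ncard + 1 := Set.ncard_insert_le _ _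
  have h3 : (t \ ({x, y} : Set (Fin n))).ncard = t.ncard - 2 := by
    rw [Set.ncard_diff hpair (Set.toFinite _), Set.ncard_pair hxy]
  have h4 : 2 ≤ t.ncard := by
    rw [← Set.ncard_pair hxy]
    exact Set.ncard_le_ncard hpair (Set.toFinite _)
  omega

/-- The set of circled positions, as natural numbers. -/
def circledNat (c : Fin n → ZMod 2) : Set ℕ := {i | ∃ hi : i < n, c ⟨i, hi⟩ = 1}

/-- The leftmost circled position. -/
noncomputable def pOne (c : Fin n → ZMod 2) : ℕ := sInf (circledNat c)

/-- The second leftmost circled position. -/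
noncomputable def pTwo (c : Fin n → ZMod 2) : ℕ :=
  sInf {i | i ∈ circledNat c ∧ pOne c < i}

lemma drop : ∀ (N : ℕ) (c : Fin n → ZMod 2), 2 ≤ {v | c v = 1}.ncard → pTwo c < N →
    ∃ c', FRelated G c c' ∧ {v | c' v = 1}.ncard < {v | c v = 1}.ncard := by
  intro N
  induction N with
  | zero => intro c _ h; omega
  | succ N ih =>
    intro c hcnt hN
    -- basic structure of the circled set
    obtain ⟨a, b, ha, hb, hab⟩ := (Set.one_lt_ncard_iff (Set.toFinite _)).mp (by omega :
      1 < {v | c v = 1}.ncard)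
    have hAne : (circledNat c).Nonempty := ⟨a.val, a.isLt, by simpa using ha⟩
    replace hN : sInf {i | i ∈ circledNat c ∧ sInf (circledNat c) < i} < N + 1 := hN
    set p1 := sInf (circledNat c) with hp1def
    have h1mem : p1 ∈ circledNat c := Nat.sInf_mem hAne
    obtain ⟨hp1n, hc1⟩ := h1mem
    have h1min : ∀ v : Fin n, c v = 1 → p1 ≤ v.val := by
      intro v hv
      exact Nat.sInf_le ⟨v.isLt, by simpa using hv⟩
    have hBne : ({i | i ∈ circledNat c ∧ p1 < i}).Nonempty := by
      rcases eq_or_ne a.val p1 with h | h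
      · refine ⟨b.val, ⟨b.isLt, by simpa using hb⟩, ?_⟩
        have := h1min b hb
        have hne : b.val ≠ p1 := by
          intro hh
          exact hab (Fin.ext (by omega))
        omega
      · refine ⟨a.val, ⟨a.isLt, by simpa using ha⟩, ?_⟩
        have := h1min a ha
        omega
    set p2 := sInf {i | i ∈ circledNat c ∧ p1 < i} with hp2def
    have h2mem : p2 ∈ {i | i ∈ circledNat c ∧ p1 < i} := Nat.sInf_mem hBne
    obtain ⟨⟨hp2n, hc2⟩, hp12⟩ := h2mem
    have h2min : ∀ v : Fin n, c v = 1 → p1 < v.val → p2 ≤ v.val := by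
      intro v hv hlt
      exact Nat.sInf_le ⟨⟨v.isLt, by simpa using hv⟩, hlt⟩
    have hsec : ∀ v : Fin n, c v = 1 → v.val = p1 ∨ p2 ≤ v.val := by
      intro v hv
      rcases eq_or_ne v.val p1 with h | h
      · exact Or.inl h
      · exact Or.inr (h2min v hv (lt_of_le_of_ne (h1min v hv) (Ne.symm h)))
    have hxmem : (⟨p1, hp1n⟩ : Fin n) ∈ {v : Fin n | c v = 1} := hc1
    have hymem : (⟨p2, hp2n⟩ : Fin n) ∈ {v : Fin n | c v = 1} := hc2
    have hxy : (⟨p1, hp1n⟩ : Fin n) ≠ ⟨p2, hp2n⟩ := by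
      intro h
      have : p1 = p2 := congrArg Fin.val h
      omega
    have hbelow : ∀ v : Fin n, v.val < p1 → c v = 0 := by
      intro v hv
      refine zmod2_eq_zero _ (fun h => ?_)
      have := h1min v h
      omega
    have hbetween : ∀ v : Fin n, p1 < v.val → v.val < p2 → c v = 0 := by
      intro v hv1 hv2
      refine zmod2_eq_zero _ (fun h => ?_)
      have := h2min v h hv1
      omega
    have hqv : ∀ v : Fin n, v.val = p1 → c v = 1 := by
      intro v hv
      have : v = ⟨p1, hp1n⟩ := Fin.ext hv
      rw [this]; exact hc1
    have hq2v : ∀ v : Fin n, v.val = p2 → c v = 1 := by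
      intro v hv
      have : v = ⟨p2, hp2n⟩ := Fin.ext hv
      rw [this]; exact hc2
    by_cases hg : p2 = p1 + 1
    · -- the two leftmost circled vertices are adjacent
      by_cases hB3 : ({i | i ∈ circledNat c ∧ p2 < i}).Nonempty
      · -- there is a third circled vertex: walk right and collide
        set p3 := sInf {i | i ∈ circledNat c ∧ p2 < i} with hp3def
        have h3mem := Nat.sInf_mem hB3
        obtain ⟨⟨hp3n, hc3⟩, hp23⟩ := h3mem
        have h3min : ∀ v : Fin n, c v = 1 → p2 < v.val → p3 ≤ v.val := by
          intro v hv hlt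
          exact Nat.sInf_le ⟨⟨v.isLt, by simpa using hv⟩, hlt⟩
        have hrel := walk_collide (p3 - p1 - 2) c p1 p3 hp3n (by omega) hqv
          (fun v hv => hq2v v (by omega)) (fun v hv => by
            have : v = ⟨p3, hp3n⟩ := Fin.ext hv
            rw [this]; exact hc3)
          (fun v hv1 hv2 => by
            refine zmod2_eq_zero _ (fun h => ?_)
            have := h3min v h (by omega)
            omega)
        refine ⟨_, hrel, ?_⟩
        refine card_lt (w := ⟨p3 - 1, by omega⟩) (x := ⟨p1, hp1n⟩) (y := ⟨p2, hp2n⟩)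
          ?_ hxmem hymem hxy
        · intro v hv
          simp only [Set.mem_setOf_eq] at hv
          by_cases h1 : v.val = p3 - 1
          · left; exact Fin.ext h1
          · rw [if_neg h1] at hv
            by_cases h2 : p1 ≤ v.val ∧ v.val ≤ p3
            · rw [if_pos h2] at hv; exact absurd hv (by decide)
            · rw [if_neg h2] at hv
              right
              have hv1 := h1min v hv
              refine ⟨hv, ?_⟩
              intro hmem
              rcases hmem with h | h
              · have : v.val = p1 := congrArg Fin.val h
                omega
              · rw [Set.mem_singleton_iff] at h
                have : v.val = p2 := congrArg Fin.val h
                omega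
      · -- no third circled vertex: walk right to the border
        have habove : ∀ v : Fin n, p1 + 1 < v.val → c v = 0 := by
          intro v hv
          refine zmod2_eq_zero _ (fun h => ?_)
          exact hB3 ⟨v.val, ⟨v.isLt, by simpa using h⟩, by omega⟩
        have hrel := walk_border (n - p1 - 2) c p1 (by omega) (by omega) hqv
          (fun v hv => hq2v v (by omega)) habove
        refine ⟨_, hrel, ?_⟩
        refine card_lt (w := ⟨n - 1, by omega⟩) (x := ⟨p1, hp1n⟩) (y := ⟨p2, hp2n⟩)
          ?_ hxmem hymem hxy
        · intro v hv
          simp only [Set.mem_setOf_eq] at hv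
          by_cases h1 : v.val = n - 1
          · left; exact Fin.ext h1
          · rw [if_neg h1] at hv
            by_cases h2 : p1 ≤ v.val
            · rw [if_pos h2] at hv; exact absurd hv (by decide)
            · rw [if_neg h2] at hv
              have := h1min v hv
              omega
    · -- gap at least 2: push p1, then walk the created pair right into p2
      have hgap : p1 + 2 ≤ p2 := by omega
      set c1 := push G ⟨p1, hp1n⟩ c with hc1def
      have hrel1 : FRelated G c c1 := pushStep_rel c ⟨p1, hp1n⟩ hc1
      have e1 : ∀ v : Fin n, v.val = p1 → c1 v = 1 := by
        intro v hv
        rw [hc1def, push_path_eval, if_neg (by omega)]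
        exact hqv v hv
      have e2 : ∀ v : Fin n, v.val = p1 + 1 → c1 v = 1 := by
        intro v hv
        rw [hc1def, push_path_eval, if_pos (by omega), hbetween v (by omega) (by omega)]
        decide
      have e3 : ∀ v : Fin n, v.val = p2 → c1 v = 1 := by
        intro v hv
        rw [hc1def, push_path_eval, if_neg (by omega)]
        exact hq2v v hv
      have e4 : ∀ v : Fin n, p1 + 1 < v.val → v.val < p2 → c1 v = 0 := by
        intro v hv1 hv2
        rw [hc1def, push_path_eval, if_neg (by omega)]
        exact hbetween v (by omega) hv2
      have hrel2 := walk_collide (p2 - p1 - 2) c1 p1 p2 hp2n (by omega) e1 e2 e3 e4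
      set c2 : Fin n → ZMod 2 := fun v =>
        if v.val = p2 - 1 then 1 else if p1 ≤ v.val ∧ v.val ≤ p2 then 0 else c1 v with hc2def
      have hrelc2 : FRelated G c c2 := hrel1.trans hrel2
      have hc2p2 : ∀ v : Fin n, v.val = p2 - 1 → c2 v = 1 := by
        intro v hv
        rw [hc2def]
        simp only
        rw [if_pos hv]
      -- membership analysis for c2
      have hmemc2 : ∀ v : Fin n, c2 v = 1 →
          v.val = p2 - 1 ∨ (1 ≤ p1 ∧ v.val = p1 - 1) ∨ (c v = 1 ∧ p2 < v.val) := by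
        intro v hv
        rw [hc2def] at hv
        simp only at hv
        by_cases h1 : v.val = p2 - 1
        · exact Or.inl h1
        · rw [if_neg h1] at hv
          by_cases h2 : p1 ≤ v.val ∧ v.val ≤ p2
          · rw [if_pos h2] at hv; exact absurd hv (by decide)
          · rw [if_neg h2] at hv
            rw [hc1def, push_path_eval] at hv
            by_cases h3 : p1 + 1 = v.val ∨ v.val + 1 = p1
            · rcases h3 with h3 | h3
              · omega
              · exact Or.inr (Or.inl ⟨by omega, by omega⟩)
            · rw [if_neg h3] at hv
              have := h1min v hv
              exact Or.inr (Or.inr ⟨hv, by omega⟩)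
      by_cases hp1z : p1 = 0
      · -- the leftmost circled vertex is 0: the count drops
        refine ⟨c2, hrelc2, ?_⟩
        refine card_lt (w := ⟨p2 - 1, by omega⟩) (x := ⟨p1, hp1n⟩) (y := ⟨p2, hp2n⟩)
          ?_ hxmem hymem hxy
        intro v hv
        simp only [Set.mem_setOf_eq] at hv
        rcases hmemc2 v hv with h | h | h
        · left; exact Fin.ext h
        · omega
        · right
          refine ⟨h.1, ?_⟩
          intro hmem
          rcases hmem with hh | hh
          · have : v.val = p1 := congrArg Fin.val hh
            omega
          · rw [Set.mem_singleton_iff] at hh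
            have : v.val = p2 := congrArg Fin.val hh
            omega
      · -- leftmost circled vertex positive: count preserved, second position decreased
        have hcard2 : {v | c2 v = 1}.ncard ≤ {v | c v = 1}.ncard := by
          refine card_le (w := ⟨p1 - 1, by omega⟩) (w' := ⟨p2 - 1, by omega⟩)
            (x := ⟨p1, hp1n⟩) (y := ⟨p2, hp2n⟩) ?_ hxmem hymem hxy
          intro v hv
          simp only [Set.mem_setOf_eq] at hv
          rcases hmemc2 v hv with h | h | h
          · right; left; exact Fin.ext h
          · left; exact Fin.ext h.2
          · right; right
            refine ⟨h.1, ?_⟩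
            intro hmem
            rcases hmem with hh | hh
            · have : v.val = p1 := congrArg Fin.val hh
              omega
            · rw [Set.mem_singleton_iff] at hh
              have : v.val = p2 := congrArg Fin.val hh
              omega
        have hc2p1 : ∀ v : Fin n, v.val = p1 - 1 → c2 v = 1 := by
          intro v hv
          rw [hc2def]
          simp only
          rw [if_neg (by omega), if_neg (by omega), hc1def, push_path_eval,
            if_pos (by omega), hbelow v (by omega)]
          decide
        have hcnt2 : 2 ≤ {v | c2 v = 1}.ncard := by
          have hsub : ({⟨p1 - 1, by omega⟩, ⟨p2 - 1, by omega⟩} : Set (Fin n)) ⊆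
              {v | c2 v = 1} := by
            intro z hz
            rcases hz with h | h
            · rw [h]; exact hc2p1 _ rfl
            · rw [Set.mem_singleton_iff] at h
              rw [h]; exact hc2p2 _ rfl
          calc 2 = ({⟨p1 - 1, by omega⟩, ⟨p2 - 1, by omega⟩} : Set (Fin n)).ncard := by
                rw [Set.ncard_pair (by
                  intro h
                  have : p1 - 1 = p2 - 1 := congrArg Fin.val h
                  omega)]
            _ ≤ _ := Set.ncard_le_ncard hsub (Set.toFinite _)
        have hpOne2 : pOne c2 ≤ p1 - 1 := Nat.sInf_le ⟨by omega, hc2p1 ⟨p1 - 1, by omega⟩ rfl⟩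
        have hpTwo2 : pTwo c2 ≤ p2 - 1 := by
          refine Nat.sInf_le ⟨⟨by omega, hc2p2 ⟨p2 - 1, by omega⟩ rfl⟩, by omega⟩
        obtain ⟨c3, hrel3, hcard3⟩ := ih c2 hcnt2 (by omega)
        exact ⟨c3, hrelc2.trans hrel3, by omega⟩

end Aux

/-- Push-the-button algorithm for the path graph (type `A`): every circling is
`F`-related to one with at most one circled vertex. -/
theorem fRelated_ncard_le_one_pathGraph (n : ℕ) (c : Fin n → ZMod 2) :
    ∃ c' : Fin n → ZMod 2,
      FRelated (SimpleGraph.pathGraph n) c c' ∧ {v | c' v = 1}.ncard ≤ 1 := by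
  suffices h : ∀ (K : ℕ) (c : Fin n → ZMod 2), {v | c v = 1}.ncard ≤ K →
      ∃ c', FRelated (SimpleGraph.pathGraph n) c c' ∧ {v | c' v = 1}.ncard ≤ 1 by
    exact h _ c le_rfl
  intro K
  induction K with
  | zero => intro c hc; exact ⟨c, Relation.ReflTransGen.refl, by omega⟩
  | succ K ih =>
    intro c hc
    by_cases h1 : {v | c v = 1}.ncard ≤ 1
    · exact ⟨c, Relation.ReflTransGen.refl, h1⟩
    · obtain ⟨c2, hrel2, hcard2⟩ := drop (pTwo c + 1) c (by omega) (by omega)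
      obtain ⟨c', hrel', hcard'⟩ := ih c2 (by omega)
      exact ⟨c', hrel2.trans hrel', hcard'⟩
end

section
/- (Combinatorial Borel–de Siebenthal theorem for disjoint unions of paths.) Let G be a finite simple graph each of whose connected components is a path (i.e., the subgraph induced on each connected component is isomorphic to a path graph). Then every circling on G is F-related to a circling having at most one circled vertex in each connected component; in particular, every circling is F-related to a circling whose total number of circled vertices is at most the number of connected components of G. -/
namespace BdSAux

lemma zmod2_em : ∀ x : ZMod 2, x = 0 ∨ x = 1 := by decide

lemma zmod2_add11 : ∀ x : ZMod 2, x + 1 + 1 = x := by decide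

lemma val01 : ((0:ZMod 2)+1).val = 1 := by decide
lemma val11 : ((1:ZMod 2)+1).val = 0 := by decide
lemma val0 : (0:ZMod 2).val = 0 := by decide
lemma val1 : (1:ZMod 2).val = 1 := by decide


lemma merge {n : ℕ} : ∀ (d : ℕ) (c : Fin n → ZMod 2) (i j : Fin n),
    j.val - i.val = d → i.val < j.val → c i = 1 → c j = 1 →
    (∀ k : Fin n, i.val < k.val → k.val < j.val → c k = 0) →
    ∃ c₁, FRelated (SimpleGraph.pathGraph n) c c₁ ∧
      ∀ v : Fin n, c₁ v =
        if v.val + 1 = i.val then c v + 1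
        else if v.val = i.val ∧ i.val + 1 < j.val then c v + 1
        else if v.val + 1 = j.val ∧ i.val + 1 < j.val then c v + 1
        else if v.val = j.val then c v + 1
        else c v := by
  intro d
  induction d using Nat.strong_induction_on with
  | _ d IH =>
    intro c i j hd hij hci hcj hint
    rcases Nat.lt_or_ge 1 d with hd2 | hd1
    · -- step case : d ≥ 2
      have hin : i.val + 1 < n := by omega
      set i' : Fin n := ⟨i.val + 1, by omega⟩ with hi'
      set c₀ : Fin n → ZMod 2 := push (SimpleGraph.pathGraph n) i c with hc₀
      have hstep : PushStep (SimpleGraph.pathGraph n) c c₀ := ⟨i, hci, rfl⟩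
      have hc₀v : ∀ v : Fin n, c₀ v = if i.val + 1 = v.val ∨ v.val + 1 = i.val then c v + 1 else c v := by
        intro v
        simp only [hc₀, push, SimpleGraph.pathGraph_adj]
      have hci' : c₀ i' = 1 := by
        rw [hc₀v, if_pos (Or.inl rfl), hint i' (by simp [hi']) (by simp [hi']; omega)]
        decide
      have hcj' : c₀ j = 1 := by
        rw [hc₀v, if_neg (by omega), hcj]
      have hint' : ∀ k : Fin n, i'.val < k.val → k.val < j.val → c₀ k = 0 := by
        intro k h1 h2
        simp only [hi'] at h1
        rw [hc₀v, if_neg (by omega)]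
        exact hint k (by omega) h2
      obtain ⟨c₁, hrel, hdesc⟩ := IH (d - 1) (by omega) c₀ i' j (by simp [hi']; omega)
        (by simp [hi']; omega) hci' hcj' hint'
      refine ⟨c₁, Relation.ReflTransGen.head hstep hrel, ?_⟩
      intro v
      rw [hdesc v]
      simp only [hi', hc₀v]
      split_ifs <;> first | rfl | exact zmod2_add11 _ | omega
    · -- base case : d = 1
      have hd1' : j.val = i.val + 1 := by omega
      refine ⟨push (SimpleGraph.pathGraph n) i c, Relation.ReflTransGen.single ⟨i, hci, rfl⟩, ?_⟩
      intro v
      simp only [push, SimpleGraph.pathGraph_adj]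
      split_ifs <;> first | rfl | exact zmod2_add11 _ | omega


noncomputable def phi {n : ℕ} (c : Fin n → ZMod 2) : ℕ :=
  ∑ v : Fin n, (v.val + 1) * (c v).val

lemma sum_ind (n t w : ℕ) :
    ∑ v : Fin n, (if v.val = t then w else 0) = if t < n then w else 0 := by
  rcases Nat.lt_or_ge t n with h | h
  · rw [if_pos h]
    have he : ∀ v : Fin n, (if v.val = t then w else 0) = (if v = ⟨t, h⟩ then w else 0) := by
      intro v; simp [Fin.ext_iff]
    rw [Finset.sum_congr rfl (fun v _ => he v), Finset.sum_ite_eq' Finset.univ (⟨t, h⟩ : Fin n)]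
    simp
  · rw [if_neg (by omega)]
    exact Finset.sum_eq_zero (fun v _ => if_neg (by omega))

lemma phi_desc {n : ℕ} (c c₁ : Fin n → ZMod 2) (i j : Fin n)
    (hij : i.val < j.val) (hci : c i = 1) (hcj : c j = 1)
    (hint : ∀ k : Fin n, i.val < k.val → k.val < j.val → c k = 0)
    (hmin : ∀ k : Fin n, k.val < i.val → c k = 0)
    (hdesc : ∀ v : Fin n, c₁ v =
        if v.val + 1 = i.val then c v + 1
        else if v.val = i.val ∧ i.val + 1 < j.val then c v + 1
        else if v.val + 1 = j.val ∧ i.val + 1 < j.val then c v + 1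
        else if v.val = j.val then c v + 1
        else c v) :
    phi c₁ + 2 = phi c := by
  have key : ∀ v : Fin n,
      (v.val + 1) * (c v).val
      + ((if v.val + 1 = i.val then i.val else 0)
        + (if v.val + 1 = j.val ∧ i.val + 1 < j.val then j.val else 0))
      = (v.val + 1) * (c₁ v).val
      + ((if v.val = i.val ∧ i.val + 1 < j.val then i.val + 1 else 0)
        + (if v.val = j.val then j.val + 1 else 0)) := by
    intro v
    rw [hdesc v]
    by_cases h1 : v.val + 1 = i.val
    · have hv : c v = 0 := hmin v (by omega)
      rw [if_pos h1, hv]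
      split_ifs <;> simp [val01, val11, val0, val1] <;> omega
    · rw [if_neg h1]
      by_cases h2 : v.val = i.val ∧ i.val + 1 < j.val
      · have hv : v = i := Fin.ext h2.1
        rw [if_pos h2, hv, hci]
        split_ifs <;> simp [val01, val11, val0, val1] <;> omega
      · rw [if_neg h2]
        by_cases h3 : v.val + 1 = j.val ∧ i.val + 1 < j.val
        · have hv : c v = 0 := hint v (by omega) (by omega)
          rw [if_pos h3, hv]
          split_ifs <;> simp [val01, val11, val0, val1] <;> omega
        · rw [if_neg h3]
          by_cases h4 : v.val = j.val
          · have hv : v = j := Fin.ext h4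
            rw [if_pos h4, hv, hcj]
            split_ifs <;> simp [val01, val11, val0, val1] <;> omega
          · rw [if_neg h4]
            split_ifs <;> simp [val01, val11, val0, val1] <;> omega
  have hsum := Finset.sum_congr rfl (fun v (_ : v ∈ Finset.univ) => key v)
  rw [Finset.sum_add_distrib, Finset.sum_add_distrib, Finset.sum_add_distrib,
    Finset.sum_add_distrib] at hsum
  have e1 : ∑ v : Fin n, (if v.val + 1 = i.val then i.val else 0)
      = if 1 ≤ i.val then i.val else 0 := by
    rcases Nat.lt_or_ge 0 i.val with h | h
    · have : ∀ v : Fin n, (if v.val + 1 = i.val then i.val else 0)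
          = (if v.val = i.val - 1 then i.val else 0) := by
        intro v; split_ifs <;> omega
      rw [Finset.sum_congr rfl (fun v _ => this v), sum_ind, if_pos (by omega), if_pos (by omega)]
    · rw [if_neg (by omega)]
      exact Finset.sum_eq_zero (fun v _ => if_neg (by omega))
  have e2 : ∑ v : Fin n, (if v.val + 1 = j.val ∧ i.val + 1 < j.val then j.val else 0)
      = if i.val + 1 < j.val then j.val else 0 := by
    by_cases h : i.val + 1 < j.val
    · have : ∀ v : Fin n, (if v.val + 1 = j.val ∧ i.val + 1 < j.val then j.val else 0)
          = (if v.val = j.val - 1 then j.val else 0) := by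
        intro v; split_ifs <;> omega
      rw [Finset.sum_congr rfl (fun v _ => this v), sum_ind, if_pos (by omega), if_pos h]
    · rw [if_neg h]
      exact Finset.sum_eq_zero (fun v _ => if_neg (by tauto))
  have e3 : ∑ v : Fin n, (if v.val = i.val ∧ i.val + 1 < j.val then i.val + 1 else 0)
      = if i.val + 1 < j.val then i.val + 1 else 0 := by
    by_cases h : i.val + 1 < j.val
    · have : ∀ v : Fin n, (if v.val = i.val ∧ i.val + 1 < j.val then i.val + 1 else 0)
          = (if v.val = i.val then i.val + 1 else 0) := by
        intro v; split_ifs <;> tauto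
      rw [Finset.sum_congr rfl (fun v _ => this v), sum_ind, if_pos i.isLt, if_pos h]
    · rw [if_neg h]
      exact Finset.sum_eq_zero (fun v _ => if_neg (by tauto))
  have e4 : ∑ v : Fin n, (if v.val = j.val then j.val + 1 else 0) = j.val + 1 := by
    rw [sum_ind, if_pos j.isLt]
  rw [e1, e2, e3, e4] at hsum
  have hjn := j.isLt
  unfold phi
  split_ifs at hsum <;> omega

lemma path_reduce {n : ℕ} : ∀ (m : ℕ) (c : Fin n → ZMod 2), phi c ≤ m →
    ∃ c', FRelated (SimpleGraph.pathGraph n) c c' ∧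
      ∀ x y : Fin n, c' x = 1 → c' y = 1 → x = y := by
  intro m
  induction m with
  | zero =>
    intro c hc
    refine ⟨c, Relation.ReflTransGen.refl, fun x y hx hy => ?_⟩
    exfalso
    have : (x.val + 1) * (c x).val ≤ phi c :=
      Finset.single_le_sum (f := fun v : Fin n => (v.val + 1) * (c v).val)
        (fun _ _ => Nat.zero_le _) (Finset.mem_univ x)
    rw [hx] at this
    simp [ZMod.val] at this
    omega
  | succ m ih =>
    intro c hc
    by_cases hone : ∀ x y : Fin n, c x = 1 → c y = 1 → x = y
    · exact ⟨c, Relation.ReflTransGen.refl, hone⟩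
    · push_neg at hone
      obtain ⟨x, y, hx, hy, hxy⟩ := hone
      classical
      set F : Finset (Fin n) := Finset.univ.filter (fun v => c v = 1) with hF
      have hxF : x ∈ F := by simp [hF, hx]
      have hyF : y ∈ F := by simp [hF, hy]
      have hFne : F.Nonempty := ⟨x, hxF⟩
      set i : Fin n := F.min' hFne with hi
      have hiF : i ∈ F := F.min'_mem hFne
      have hci : c i = 1 := by simpa [hF] using hiF
      have hFe : (F.erase i).Nonempty := by
        rcases eq_or_ne x i with h | h
        · exact ⟨y, Finset.mem_erase.mpr ⟨by rw [← h]; exact fun e => hxy e.symm, hyF⟩⟩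
        · exact ⟨x, Finset.mem_erase.mpr ⟨h, hxF⟩⟩
      set j : Fin n := (F.erase i).min' hFe with hj
      have hjE : j ∈ F.erase i := (F.erase i).min'_mem hFe
      have hjF : j ∈ F := Finset.mem_of_mem_erase hjE
      have hcj : c j = 1 := by simpa [hF] using hjF
      have hji : j ≠ i := (Finset.mem_erase.mp hjE).1
      have hij : i.val < j.val := by
        have h1 : i ≤ j := F.min'_le j hjF
        have := Fin.val_fin_le.mpr h1
        rcases eq_or_ne i.val j.val with h | h
        · exact absurd (Fin.ext h).symm hji
        · omega
      have hmin : ∀ k : Fin n, k.val < i.val → c k = 0 := by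
        intro k hk
        rcases zmod2_em (c k) with h | h
        · exact h
        · exfalso
          have : i ≤ k := F.min'_le k (by simp [hF, h])
          have := Fin.val_fin_le.mpr this
          omega
      have hint : ∀ k : Fin n, i.val < k.val → k.val < j.val → c k = 0 := by
        intro k h1 h2
        rcases zmod2_em (c k) with h | h
        · exact h
        · exfalso
          have hkE : k ∈ F.erase i := Finset.mem_erase.mpr ⟨by intro e; rw [e] at h1; omega, by simp [hF, h]⟩
          have : j ≤ k := (F.erase i).min'_le k hkE
          have := Fin.val_fin_le.mpr this
          omega
      obtain ⟨c₁, hrel₁, hdesc⟩ := merge (j.val - i.val) c i j rfl hij hci hcj hint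
      have hphi : phi c₁ + 2 = phi c := phi_desc c c₁ i j hij hci hcj hint hmin hdesc
      obtain ⟨c', hrel₂, hone'⟩ := ih c₁ (by omega)
      exact ⟨c', hrel₁.trans hrel₂, hone'⟩

variable {V : Type*}

lemma transfer {G : SimpleGraph V} {K : G.ConnectedComponent} {n : ℕ}
    (e : G.induce K.supp ≃g SimpleGraph.pathGraph n) {a b : Fin n → ZMod 2}
    (hab : FRelated (SimpleGraph.pathGraph n) a b) :
    ∀ c : V → ZMod 2, (∀ x : Fin n, a x = c ((e.symm x) : V)) →
    ∃ c', FRelated G c c' ∧ (∀ v, v ∉ K.supp → c' v = c v) ∧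
      (∀ x : Fin n, b x = c' ((e.symm x) : V)) := by
  induction hab using Relation.ReflTransGen.head_induction_on with
  | refl =>
    intro c hc
    exact ⟨c, Relation.ReflTransGen.refl, fun _ _ => rfl, hc⟩
  | @head a₀ a₁ hstep _ ih =>
    intro c hc
    obtain ⟨x, hx1, hx2⟩ := hstep
    set v : V := ((e.symm x : K.supp) : V) with hv
    have hvK : v ∈ K.supp := (e.symm x).2
    set c₀ : V → ZMod 2 := push G v c with hc₀
    have hadj : ∀ y : Fin n, G.Adj v ((e.symm y : K.supp) : V) ↔ (SimpleGraph.pathGraph n).Adj x y := by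
      intro y
      rw [← e.symm.map_adj_iff]
      rfl
    have h1 : ∀ y : Fin n, a₁ y = c₀ ((e.symm y : K.supp) : V) := by
      intro y
      rw [hx2]
      simp only [push, hc₀]
      rw [hc y]
      by_cases h : (SimpleGraph.pathGraph n).Adj x y
      · rw [if_pos h, if_pos ((hadj y).mpr h)]
      · rw [if_neg h, if_neg (fun hh => h ((hadj y).mp hh))]
    have hout : ∀ w, w ∉ K.supp → c₀ w = c w := by
      intro w hw
      simp only [hc₀, push]
      rw [if_neg]
      intro hadj'
      apply hw
      rw [SimpleGraph.ConnectedComponent.mem_supp_iff] at hvK ⊢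
      rw [← hvK]
      exact (SimpleGraph.ConnectedComponent.eq.mpr hadj'.symm.reachable)
    have hcv : c v = 1 := by rw [← hc x]; exact hx1
    obtain ⟨c', hrel, hout', hres⟩ := ih c₀ h1
    refine ⟨c', Relation.ReflTransGen.head ⟨v, hcv, rfl⟩ hrel, ?_, hres⟩
    intro w hw
    rw [hout' w hw, hout w hw]

lemma component_reduce {G : SimpleGraph V} (K : G.ConnectedComponent) {n : ℕ}
    (e : G.induce K.supp ≃g SimpleGraph.pathGraph n) (c : V → ZMod 2) :
    ∃ c', FRelated G c c' ∧ (∀ v, v ∉ K.supp → c' v = c v) ∧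
      Set.Subsingleton {v | c' v = 1 ∧ v ∈ K.supp} := by
  set a : Fin n → ZMod 2 := fun x => c ((e.symm x : K.supp) : V) with ha
  obtain ⟨b, hab, hone⟩ := path_reduce (phi a) a le_rfl
  obtain ⟨c', hrel, hout, hres⟩ := transfer e hab c (fun x => rfl)
  refine ⟨c', hrel, hout, ?_⟩
  rintro u ⟨hu1, hu2⟩ w ⟨hw1, hw2⟩
  have hu' : u = ((e.symm (e ⟨u, hu2⟩) : K.supp) : V) := by simp
  have hw' : w = ((e.symm (e ⟨w, hw2⟩) : K.supp) : V) := by simp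
  have h1 : b (e ⟨u, hu2⟩) = 1 := by rw [hres]; rw [← hu']; exact hu1
  have h2 : b (e ⟨w, hw2⟩) = 1 := by rw [hres]; rw [← hw']; exact hw1
  have := hone _ _ h1 h2
  have : (⟨u, hu2⟩ : K.supp) = ⟨w, hw2⟩ := e.toEquiv.injective this
  exact congrArg Subtype.val this

lemma glue (G : SimpleGraph V)
    (hpath : ∀ K : G.ConnectedComponent,
      ∃ n : ℕ, Nonempty (G.induce K.supp ≃g SimpleGraph.pathGraph n))
    (S : Finset G.ConnectedComponent) :
    ∀ c : V → ZMod 2, ∃ c', FRelated G c c' ∧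
      ∀ K ∈ S, Set.Subsingleton {v | c' v = 1 ∧ v ∈ K.supp} := by
  classical
  induction S using Finset.induction_on with
  | empty => exact fun c => ⟨c, Relation.ReflTransGen.refl, by simp⟩
  | @insert K S hKS ih =>
    intro c
    obtain ⟨c₁, hrel₁, hS⟩ := ih c
    obtain ⟨n, ⟨e⟩⟩ := hpath K
    obtain ⟨c₂, hrel₂, hout, hsub⟩ := component_reduce K e c₁
    refine ⟨c₂, hrel₁.trans hrel₂, ?_⟩
    intro K' hK'
    rcases Finset.mem_insert.mp hK' with h | h
    · rw [h]; exact hsub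
    · have hdisj : ∀ v, v ∈ K'.supp → v ∉ K.supp := by
        intro v hv1 hv2
        rw [SimpleGraph.ConnectedComponent.mem_supp_iff] at hv1 hv2
        exact hKS ((hv1.symm.trans hv2) ▸ h)
      have : {v | c₂ v = 1 ∧ v ∈ K'.supp} = {v | c₁ v = 1 ∧ v ∈ K'.supp} := by
        ext v
        simp only [Set.mem_setOf_eq, and_congr_left_iff]
        intro hv
        rw [hout v (hdisj v hv)]
      rw [this]
      exact hS K' h


end BdSAux

open BdSAux in
/-- Combinatorial Borel–de Siebenthal theorem for disjoint unions of paths: if every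
connected component of `G` induces a path graph, then every circling is `F`-related to
one with at most one circled vertex in each connected component; in particular to one
whose total number of circled vertices is at most the number of connected components. -/
theorem fRelated_reduced_of_components_path {V : Type*} [Fintype V] (G : SimpleGraph V)
    (hpath : ∀ K : G.ConnectedComponent,
      ∃ n : ℕ, Nonempty (G.induce K.supp ≃g SimpleGraph.pathGraph n))
    (c : V → ZMod 2) :
    ∃ c' : V → ZMod 2, FRelated G c c' ∧
      (∀ K : G.ConnectedComponent, {v | c' v = 1 ∧ v ∈ K.supp}.ncard ≤ 1) ∧
      {v | c' v = 1}.ncard ≤ Nat.card G.ConnectedComponent := by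
  classical
  haveI : Fintype G.ConnectedComponent := Fintype.ofFinite _
  obtain ⟨c', hrel, hsub⟩ := glue G hpath Finset.univ c
  have hsub' : ∀ K : G.ConnectedComponent, Set.Subsingleton {v | c' v = 1 ∧ v ∈ K.supp} :=
    fun K => hsub K (Finset.mem_univ K)
  refine ⟨c', hrel, ?_, ?_⟩
  · intro K
    rcases Set.Subsingleton.eq_empty_or_singleton (hsub' K) with h | ⟨a, h⟩
    · rw [h]; simp
    · rw [h]; simp
  · have h1 : {v | c' v = 1}.ncard = (Finset.univ.filter (fun v => c' v = 1)).card := by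
      rw [Set.ncard_eq_toFinset_card']
      congr 1
      ext v
      simp
    rw [h1]
    rw [Finset.card_eq_sum_card_fiberwise
      (f := fun v => G.connectedComponentMk v) (t := Finset.univ) (fun v _ => Finset.mem_univ _)]
    have h2 : ∀ K : G.ConnectedComponent,
        ((Finset.univ.filter (fun v => c' v = 1)).filter
          (fun v => G.connectedComponentMk v = K)).card ≤ 1 := by
      intro K
      apply Finset.card_le_one.mpr
      intro u hu w hw
      simp only [Finset.mem_filter, Finset.mem_univ, true_and] at hu hw
      exact hsub' K ⟨hu.1, (SimpleGraph.ConnectedComponent.mem_supp_iff K u).mpr hu.2⟩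
        ⟨hw.1, (SimpleGraph.ConnectedComponent.mem_supp_iff K w).mpr hw.2⟩
    calc ∑ K : G.ConnectedComponent, ((Finset.univ.filter (fun v => c' v = 1)).filter
          (fun v => G.connectedComponentMk v = K)).card
        ≤ ∑ _K : G.ConnectedComponent, 1 := Finset.sum_le_sum (fun K _ => h2 K)
      _ = Fintype.card G.ConnectedComponent := by simp
      _ = Nat.card G.ConnectedComponent := (Nat.card_eq_fintype_card).symm
end

section
/- (Push-the-button algorithm, type D.) Let n ≥ 4 and let G be the tree on vertices {1, 2, ..., n} whose edges are {1,3}, {2,3}, and {k, k+1} for 3 ≤ k ≤ n−1 (the Dynkin diagram of type D_n, viewed as a simple graph). Then every circling on G is F-related to a circling with at most one circled vertex. -/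
/-- The Dynkin diagram of type `D n`, viewed as a simple graph on vertices
`{1, …, n}` (vertex `v : Fin n` has label `v.val + 1`), with edges `{1,3}`, `{2,3}`
and `{k, k+1}` for `3 ≤ k ≤ n - 1`. -/
def dynkinD (n : ℕ) : SimpleGraph (Fin n) :=
  SimpleGraph.fromRel fun u v =>
    (u.val + 1 = 1 ∧ v.val + 1 = 3) ∨ (u.val + 1 = 2 ∧ v.val + 1 = 3) ∨
      (3 ≤ u.val + 1 ∧ v.val + 1 = u.val + 1 + 1)

namespace DynD

variable {n : ℕ}

lemma zmod2cases (x : ZMod 2) : x = 0 ∨ x = 1 := by revert x; decide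

lemma zmod2add (x : ZMod 2) : x + 1 + 1 = x := by revert x; decide

lemma frel_push (G : SimpleGraph (Fin n)) (c : Fin n → ZMod 2) (i : Fin n) (h : c i = 1) :
    FRelated G c (push G i c) :=
  Relation.ReflTransGen.single ⟨i, h, rfl⟩

lemma adj_iff (i j : Fin n) :
    (dynkinD n).Adj i j ↔ ((i.val = 0 ∧ j.val = 2) ∨ (i.val = 2 ∧ j.val = 0) ∨
      (i.val = 1 ∧ j.val = 2) ∨ (i.val = 2 ∧ j.val = 1) ∨
      (2 ≤ i.val ∧ j.val = i.val + 1) ∨ (2 ≤ j.val ∧ i.val = j.val + 1)) := by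
  simp only [dynkinD, SimpleGraph.fromRel_adj, Ne, Fin.ext_iff]
  omega

lemma push_fork (p : Fin n) (hp : p.val = 0 ∨ p.val = 1) (c : Fin n → ZMod 2) (v : Fin n) :
    push (dynkinD n) p c v = if v.val = 2 then c v + 1 else c v := by
  have h : (dynkinD n).Adj p v ↔ v.val = 2 := by rw [adj_iff]; omega
  classical
  simp only [push]
  exact if_congr h rfl rfl

lemma push_two (i : Fin n) (hi : i.val = 2) (c : Fin n → ZMod 2) (v : Fin n) :
    push (dynkinD n) i c v = if v.val = 0 ∨ v.val = 1 ∨ v.val = 3 then c v + 1 else c v := by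
  have h : (dynkinD n).Adj i v ↔ (v.val = 0 ∨ v.val = 1 ∨ v.val = 3) := by rw [adj_iff]; omega
  classical
  simp only [push]
  exact if_congr h rfl rfl

lemma push_mid (i : Fin n) (hi : 3 ≤ i.val) (c : Fin n → ZMod 2) (v : Fin n) :
    push (dynkinD n) i c v = if (v.val + 1 = i.val ∨ v.val = i.val + 1) then c v + 1 else c v := by
  have h : (dynkinD n).Adj i v ↔ (v.val + 1 = i.val ∨ v.val = i.val + 1) := by
    rw [adj_iff]; omega
  classical
  simp only [push]
  exact if_congr h rfl rfl

/-- Slide a pair `(j, j+1)` to the right until it merges with a circle at `r`. -/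
lemma slideA : ∀ d j r (c : Fin n → ZMod 2), 2 ≤ j → r = j + 2 + d → r < n →
    (∀ hj : j < n, c ⟨j, hj⟩ = 1) →
    (∀ h1 : j + 1 < n, c ⟨j + 1, h1⟩ = 1) →
    (∀ l (hl : l < n), j + 1 < l → l < r → c ⟨l, hl⟩ = 0) →
    (∀ hr : r < n, c ⟨r, hr⟩ = 1) →
    ∃ c', FRelated (dynkinD n) c c' ∧
      ∀ v : Fin n, c' v = if j ≤ v.val ∧ v.val ≤ r then (if v.val = r - 1 then 1 else 0)
        else c v := by
  intro d
  induction d with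
  | zero =>
    intro j r c hj2 hr2 hrn hpj hpj1 hbet hcr
    subst hr2
    have hj1n : j + 1 < n := by omega
    refine ⟨push (dynkinD n) ⟨j + 1, hj1n⟩ c, frel_push _ _ _ (hpj1 hj1n), ?_⟩
    intro v
    have hvlt := v.isLt
    rw [push_mid ⟨j + 1, hj1n⟩ (by simp only [Fin.val_mk]; omega) c v]
    simp only [Fin.val_mk]
    split_ifs with hA hB hC hC hB hC
    · exfalso; omega
    · rcases hA with h | h
      · rw [show v = ⟨j, by omega⟩ from Fin.ext (show v.val = j by omega), hpj]; decide
      · rw [show v = ⟨j + 2 + 0, by omega⟩ from Fin.ext (show v.val = j + 2 + 0 by omega), hcr]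
        decide
    · exfalso; omega
    · rw [show v = ⟨j + 1, hj1n⟩ from Fin.ext (show v.val = j + 1 by omega), hpj1]
    · exfalso; omega
    · rfl
  | succ d ih =>
    intro j r c hj2 hr2 hrn hpj hpj1 hbet hcr
    have hj1n : j + 1 < n := by omega
    have hj2n : j + 2 < n := by omega
    set c1 := push (dynkinD n) ⟨j + 1, hj1n⟩ c with hc1def
    have hc1 : ∀ v : Fin n, c1 v = if v.val = j ∨ v.val = j + 2 then c v + 1 else c v := by
      intro v
      rw [hc1def, push_mid ⟨j + 1, hj1n⟩ (by simp only [Fin.val_mk]; omega) c v]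
      simp only [Fin.val_mk]
      exact if_congr (by omega) rfl rfl
    have H1 : ∀ h : j + 1 < n, c1 ⟨j + 1, h⟩ = 1 := by
      intro h
      rw [hc1 ⟨j + 1, h⟩]
      simp only [Fin.val_mk]
      rw [if_neg (by omega)]
      exact hpj1 h
    have H2 : ∀ h : j + 2 < n, c1 ⟨j + 2, h⟩ = 1 := by
      intro h
      rw [hc1 ⟨j + 2, h⟩]
      simp only [Fin.val_mk]
      rw [if_pos (Or.inr trivial), hbet (j + 2) h (by omega) (by omega)]
      decide
    have H3 : ∀ l (hl : l < n), j + 2 < l → l < r → c1 ⟨l, hl⟩ = 0 := by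
      intro l hl h1 h2
      rw [hc1 ⟨l, hl⟩]
      simp only [Fin.val_mk]
      rw [if_neg (by omega)]
      exact hbet l hl (by omega) h2
    have H4 : ∀ hr : r < n, c1 ⟨r, hr⟩ = 1 := by
      intro hr
      rw [hc1 ⟨r, hr⟩]
      simp only [Fin.val_mk]
      rw [if_neg (by omega)]
      exact hcr hr
    obtain ⟨c2, hrel2, hform2⟩ := ih (j + 1) r c1 (by omega) (by omega) hrn H1 H2 H3 H4
    refine ⟨c2, Relation.ReflTransGen.trans (frel_push _ _ _ (hpj1 hj1n)) hrel2, ?_⟩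
    intro v
    have hvlt := v.isLt
    rw [hform2 v, hc1 v]
    split_ifs <;> first
      | rfl
      | (exfalso; omega)
      | (rw [show v = ⟨j, by omega⟩ from Fin.ext (show v.val = j by omega), hpj]; decide)

/-- Slide a pair `(j, j+1)` to the right end, leaving a single circle at `n-1`. -/
lemma slideB : ∀ d j (c : Fin n → ZMod 2), 2 ≤ j → j + 1 + d = n - 1 → j + 1 < n →
    (∀ hj : j < n, c ⟨j, hj⟩ = 1) →
    (∀ h1 : j + 1 < n, c ⟨j + 1, h1⟩ = 1) →
    (∀ l (hl : l < n), j + 1 < l → c ⟨l, hl⟩ = 0) →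
    ∃ c', FRelated (dynkinD n) c c' ∧
      ∀ v : Fin n, c' v = if j ≤ v.val then (if v.val = n - 1 then 1 else 0) else c v := by
  intro d
  induction d with
  | zero =>
    intro j c hj2 hend hj1n hpj hpj1 hbig
    refine ⟨push (dynkinD n) ⟨j + 1, hj1n⟩ c, frel_push _ _ _ (hpj1 hj1n), ?_⟩
    intro v
    have hvlt := v.isLt
    rw [push_mid ⟨j + 1, hj1n⟩ (by simp only [Fin.val_mk]; omega) c v]
    simp only [Fin.val_mk]
    split_ifs <;> first
      | rfl
      | (exfalso; omega)
      | (rw [show v = ⟨j, by omega⟩ from Fin.ext (show v.val = j by omega), hpj]; decide)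
      | (rw [show v = ⟨j + 1, hj1n⟩ from Fin.ext (show v.val = j + 1 by omega), hpj1])
  | succ d ih =>
    intro j c hj2 hend hj1n hpj hpj1 hbig
    have hj2n : j + 2 < n := by omega
    set c1 := push (dynkinD n) ⟨j + 1, hj1n⟩ c with hc1def
    have hc1 : ∀ v : Fin n, c1 v = if v.val = j ∨ v.val = j + 2 then c v + 1 else c v := by
      intro v
      rw [hc1def, push_mid ⟨j + 1, hj1n⟩ (by simp only [Fin.val_mk]; omega) c v]
      simp only [Fin.val_mk]
      exact if_congr (by omega) rfl rfl
    have H1 : ∀ h : j + 1 < n, c1 ⟨j + 1, h⟩ = 1 := by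
      intro h
      rw [hc1 ⟨j + 1, h⟩]
      simp only [Fin.val_mk]
      rw [if_neg (by omega)]
      exact hpj1 h
    have H2 : ∀ h : j + 2 < n, c1 ⟨j + 2, h⟩ = 1 := by
      intro h
      rw [hc1 ⟨j + 2, h⟩]
      simp only [Fin.val_mk]
      rw [if_pos (Or.inr trivial), hbig (j + 2) h (by omega)]
      decide
    have H3 : ∀ l (hl : l < n), j + 2 < l → c1 ⟨l, hl⟩ = 0 := by
      intro l hl h1
      rw [hc1 ⟨l, hl⟩]
      simp only [Fin.val_mk]
      rw [if_neg (by omega)]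
      exact hbig l hl (by omega)
    obtain ⟨c2, hrel2, hform2⟩ := ih (j + 1) c1 (by omega) (by omega) hj2n H1 H2 H3
    refine ⟨c2, Relation.ReflTransGen.trans (frel_push _ _ _ (hpj1 hj1n)) hrel2, ?_⟩
    intro v
    have hvlt := v.isLt
    rw [hform2 v, hc1 v]
    split_ifs <;> first
      | rfl
      | (exfalso; omega)
      | (rw [show v = ⟨j, by omega⟩ from Fin.ext (show v.val = j by omega), hpj]; decide)

open Classical in
/-- The indicator circling of the set of values satisfying `P`. -/
noncomputable def ind (P : ℕ → Prop) : Fin n → ZMod 2 := fun v => if P v.val then 1 else 0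

lemma ind_one {P : ℕ → Prop} (v : Fin n) : ind P v = 1 ↔ P v.val := by
  unfold ind
  by_cases h : P v.val
  · rw [if_pos h]; exact ⟨fun _ => h, fun _ => rfl⟩
  · rw [if_neg h]; exact ⟨fun h0 => absurd h0 (by decide), fun hp => absurd hp h⟩

lemma ind_congr {P Q : ℕ → Prop} (h : ∀ x, x < n → (P x ↔ Q x)) :
    ind (n := n) P = ind Q := by
  classical
  funext v
  unfold ind
  exact if_congr (h v.val v.isLt) rfl rfl

lemma push_fork_ind (p : Fin n) (hp : p.val = 0 ∨ p.val = 1) (P : ℕ → Prop) :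
    push (dynkinD n) p (ind P) = ind (fun x => (x = 2 ∧ ¬ P x) ∨ (x ≠ 2 ∧ P x)) := by
  funext v
  rw [push_fork p hp]
  unfold ind
  split_ifs <;> first | rfl | decide | tauto

lemma push_two_ind (i : Fin n) (hi : i.val = 2) (P : ℕ → Prop) :
    push (dynkinD n) i (ind P) =
      ind (fun x => ((x = 0 ∨ x = 1 ∨ x = 3) ∧ ¬ P x) ∨ (¬(x = 0 ∨ x = 1 ∨ x = 3) ∧ P x)) := by
  funext v
  rw [push_two i hi]
  unfold ind
  split_ifs <;> first | rfl | decide | tauto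

lemma slideA_ind (d j r : ℕ) (P : ℕ → Prop) (hj2 : 2 ≤ j) (hr : r = j + 2 + d)
    (hrn : r < n) (hPj : P j) (hPj1 : P (j + 1))
    (hbet : ∀ l, j + 1 < l → l < r → ¬ P l) (hPr : P r) :
    FRelated (dynkinD n) (ind P)
      (ind (fun x => (j ≤ x ∧ x ≤ r ∧ x = r - 1) ∨ (¬(j ≤ x ∧ x ≤ r) ∧ P x))) := by
  obtain ⟨c', hrel, hform⟩ := slideA d j r (ind P) hj2 hr hrn
    (fun hj => (ind_one _).2 hPj) (fun h1 => (ind_one _).2 hPj1)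
    (fun l hl h1 h2 => by
      unfold ind; simp only [Fin.val_mk]; rw [if_neg (hbet l h1 h2)])
    (fun hr' => (ind_one _).2 hPr)
  have : c' = ind (fun x => (j ≤ x ∧ x ≤ r ∧ x = r - 1) ∨ (¬(j ≤ x ∧ x ≤ r) ∧ P x)) := by
    funext v
    rw [hform v]
    unfold ind
    split_ifs <;> first | rfl | decide | tauto
  rwa [this] at hrel

lemma slideB_ind (d j : ℕ) (P : ℕ → Prop) (hj2 : 2 ≤ j) (hend : j + 1 + d = n - 1)
    (hj1n : j + 1 < n) (hPj : P j) (hPj1 : P (j + 1))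
    (hbig : ∀ l, j + 1 < l → ¬ P l) :
    FRelated (dynkinD n) (ind P)
      (ind (fun x => (j ≤ x ∧ x = n - 1) ∨ (¬ j ≤ x ∧ P x))) := by
  obtain ⟨c', hrel, hform⟩ := slideB d j (ind P) hj2 hend hj1n
    (fun hj => (ind_one _).2 hPj) (fun h1 => (ind_one _).2 hPj1)
    (fun l hl h1 => by
      unfold ind; simp only [Fin.val_mk]; rw [if_neg (hbig l h1)])
  have : c' = ind (fun x => (j ≤ x ∧ x = n - 1) ∨ (¬ j ≤ x ∧ P x)) := by
    funext v
    rw [hform v]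
    unfold ind
    split_ifs <;> first | rfl | decide | tauto
  rwa [this] at hrel

def Done (c : Fin n → ZMod 2) : Prop := ∃ x : Fin n, ∀ v, c v = 1 → v = x

lemma frel_trans {G : SimpleGraph (Fin n)} {a b c : Fin n → ZMod 2} :
    FRelated G a b → FRelated G b c → FRelated G a c :=
  Relation.ReflTransGen.trans

/-- The key lemma for the odd case: one circle on the fork (at `p`), one on the tail
(at position `t`); reduce to a single circle. -/
lemma lemE (hn : 4 ≤ n) : ∀ t, 2 ≤ t → t < n → ∀ (p q : Fin n),
    ((p.val = 0 ∧ q.val = 1) ∨ (p.val = 1 ∧ q.val = 0)) →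
    ∃ c', FRelated (dynkinD n) (ind (fun x => x = p.val ∨ x = t)) c' ∧ Done c' := by
  intro t
  induction t using Nat.strong_induction_on with
  | _ t ih =>
  intro ht2 htn p q hpq
  have h2n : 2 < n := by omega
  have hploc : p.val = 0 ∨ p.val = 1 := by omega
  -- push at p, flipping vertex 2
  have hrel1 : FRelated (dynkinD n) (ind (fun x => x = p.val ∨ x = t))
      (ind (fun x => (x = 2 ∧ ¬ (x = p.val ∨ x = t)) ∨ (x ≠ 2 ∧ (x = p.val ∨ x = t)))) := by
    rw [← push_fork_ind p hploc]
    exact frel_push _ _ _ ((ind_one p).2 (Or.inl rfl))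
  rcases eq_or_lt_of_le ht2 with ht2' | ht3
  · -- t = 2 : pushing p clears vertex 2
    refine ⟨_, hrel1, p, fun v hv => Fin.ext ?_⟩
    have h := (ind_one v).1 hv
    have := v.isLt
    omega
  · -- t ≥ 3 : now vertices 2 and t (and p) are circled; push vertex 2
    have hrel2 : FRelated (dynkinD n)
        (ind (fun x => (x = 2 ∧ ¬ (x = p.val ∨ x = t)) ∨ (x ≠ 2 ∧ (x = p.val ∨ x = t))))
        (ind (fun x => ((x = 0 ∨ x = 1 ∨ x = 3) ∧
            ¬ ((x = 2 ∧ ¬ (x = p.val ∨ x = t)) ∨ (x ≠ 2 ∧ (x = p.val ∨ x = t)))) ∨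
          (¬(x = 0 ∨ x = 1 ∨ x = 3) ∧
            ((x = 2 ∧ ¬ (x = p.val ∨ x = t)) ∨ (x ≠ 2 ∧ (x = p.val ∨ x = t)))))) := by
    

      rw [← push_two_ind ⟨2, h2n⟩ rfl]
      refine frel_push _ _ _ ((ind_one _).2 ?_)
      show (2 = 2 ∧ ¬ ((2:ℕ) = p.val ∨ 2 = t)) ∨ ((2:ℕ) ≠ 2 ∧ ((2:ℕ) = p.val ∨ 2 = t))
      omega
  -- simplify the current configuration
    have hsimp : ind (n := n) (fun x => ((x = 0 ∨ x = 1 ∨ x = 3) ∧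
            ¬ ((x = 2 ∧ ¬ (x = p.val ∨ x = t)) ∨ (x ≠ 2 ∧ (x = p.val ∨ x = t)))) ∨
          (¬(x = 0 ∨ x = 1 ∨ x = 3) ∧
            ((x = 2 ∧ ¬ (x = p.val ∨ x = t)) ∨ (x ≠ 2 ∧ (x = p.val ∨ x = t))))) =
        ind (fun x => x = q.val ∨ x = 2 ∨ (x = 3 ∧ 3 ≠ t) ∨ (x = t ∧ t ≠ 3)) :=
      ind_congr (fun x hx => by omega)
    rw [hsimp] at hrel2
    rcases eq_or_lt_of_le (show 3 ≤ t from ht3) with ht3' | ht4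
    · -- t = 3 : circles are {q, 2}; push q to clear 2
      have hrel3 : FRelated (dynkinD n)
          (ind (fun x => x = q.val ∨ x = 2 ∨ (x = 3 ∧ 3 ≠ t) ∨ (x = t ∧ t ≠ 3)))
          (ind (fun x => (x = 2 ∧ ¬ (x = q.val ∨ x = 2 ∨ (x = 3 ∧ 3 ≠ t) ∨ (x = t ∧ t ≠ 3))) ∨
            (x ≠ 2 ∧ (x = q.val ∨ x = 2 ∨ (x = 3 ∧ 3 ≠ t) ∨ (x = t ∧ t ≠ 3))))) := by
        rw [← push_fork_ind q (by omega)]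
        exact frel_push _ _ _ ((ind_one q).2 (Or.inl rfl))
      refine ⟨_, frel_trans hrel1 (frel_trans hrel2 hrel3), q, fun v hv => Fin.ext ?_⟩
      have h := (ind_one v).1 hv
      have := v.isLt
      omega
    · -- t ≥ 4 : circles are {q, 2, 3, t}; slide the pair (2,3) into t
      have hrel3 := slideA_ind (n := n) (t - 4) 2 t
        (fun x => x = q.val ∨ x = 2 ∨ (x = 3 ∧ 3 ≠ t) ∨ (x = t ∧ t ≠ 3))
        (by omega) (by omega) htn (by omega) (by omega) (fun l h1 h2 => by omega) (by omega)
      have hsimp2 : ind (n := n) (fun x => (2 ≤ x ∧ x ≤ t ∧ x = t - 1) ∨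
            (¬(2 ≤ x ∧ x ≤ t) ∧ (x = q.val ∨ x = 2 ∨ (x = 3 ∧ 3 ≠ t) ∨ (x = t ∧ t ≠ 3)))) =
          ind (fun x => x = q.val ∨ x = t - 1) := ind_congr (fun x hx => by omega)
      rw [hsimp2] at hrel3
      obtain ⟨c', hrel4, hdone⟩ := ih (t - 1) (by omega) (by omega) (by omega) q p (by omega)
      exact ⟨c', frel_trans hrel1 (frel_trans hrel2 (frel_trans hrel3 hrel4)), hdone⟩

lemma done_ind (P : ℕ → Prop) (m : ℕ) (hm : m < n) (h : ∀ x, x < n → P x → x = m) :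
    Done (ind (n := n) P) :=
  ⟨⟨m, hm⟩, fun v hv => Fin.ext (h v.val v.isLt ((ind_one v).1 hv))⟩

lemma frel_ind_congr {P Q : ℕ → Prop} (R : ℕ → Prop)
    (h : FRelated (dynkinD n) (ind P) (ind Q)) (hQ : ∀ x, x < n → (Q x ↔ R x)) :
    FRelated (dynkinD n) (ind P) (ind R) := by
  rwa [ind_congr hQ] at h

lemma frel_push_fork (p : Fin n) (hp : p.val = 0 ∨ p.val = 1) (P : ℕ → Prop) (hP : P p.val) :
    FRelated (dynkinD n) (ind P) (ind (fun x => (x = 2 ∧ ¬ P x) ∨ (x ≠ 2 ∧ P x))) := by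
  rw [← push_fork_ind p hp]
  exact frel_push _ _ _ ((ind_one _).2 hP)

lemma frel_push_two (h2n : 2 < n) (P : ℕ → Prop) (hP : P 2) :
    FRelated (dynkinD n) (ind P)
      (ind (fun x => ((x = 0 ∨ x = 1 ∨ x = 3) ∧ ¬ P x) ∨
        (¬(x = 0 ∨ x = 1 ∨ x = 3) ∧ P x))) := by
  rw [← push_two_ind ⟨2, h2n⟩ rfl]
  exact frel_push _ _ _ ((ind_one _).2 hP)

def AtMostOneTail (c : Fin n → ZMod 2) : Prop :=
  ∀ v w : Fin n, 2 ≤ v.val → 2 ≤ w.val → c v = 1 → c w = 1 → v = w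

lemma phase2 (hn : 4 ≤ n) (c : Fin n → ZMod 2) (hone : AtMostOneTail c) :
    ∃ c', FRelated (dynkinD n) c c' ∧ Done c' := by
  have h0n : 0 < n := by omega
  have h1n : 1 < n := by omega
  have h2n : 2 < n := by omega
  rcases zmod2cases (c ⟨0, h0n⟩) with ha | ha <;> rcases zmod2cases (c ⟨1, h1n⟩) with hb | hb <;>
    by_cases htail : ∃ v : Fin n, 2 ≤ v.val ∧ c v = 1
  case neg =>
    -- (0,0), empty tail
    push_neg at htail
    refine ⟨c, Relation.ReflTransGen.refl, ⟨0, h0n⟩, fun v hv => ?_⟩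
    exfalso
    have hvlt := v.isLt
    rcases Nat.lt_or_ge v.val 2 with h | h
    · rcases Nat.lt_or_ge v.val 1 with h' | h'
      · rw [show v = ⟨0, h0n⟩ from Fin.ext (show v.val = 0 by omega), ha] at hv
        exact (by decide : ¬ ((0 : ZMod 2) = 1)) hv
      · rw [show v = ⟨1, h1n⟩ from Fin.ext (show v.val = 1 by omega), hb] at hv
        exact (by decide : ¬ ((0 : ZMod 2) = 1)) hv
    · rcases zmod2cases (c v) with h' | h'
      · rw [h'] at hv; exact (by decide : ¬ ((0 : ZMod 2) = 1)) hv
      · exact htail v h h'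
  case pos =>
    -- (0,0), tail circle at w
    obtain ⟨w, hw2, hw1⟩ := htail
    refine ⟨c, Relation.ReflTransGen.refl, w, fun v hv => ?_⟩
    have hvlt := v.isLt
    rcases Nat.lt_or_ge v.val 2 with h | h
    · exfalso
      rcases Nat.lt_or_ge v.val 1 with h' | h'
      · rw [show v = ⟨0, h0n⟩ from Fin.ext (show v.val = 0 by omega), ha] at hv
        exact (by decide : ¬ ((0 : ZMod 2) = 1)) hv
      · rw [show v = ⟨1, h1n⟩ from Fin.ext (show v.val = 1 by omega), hb] at hv
        exact (by decide : ¬ ((0 : ZMod 2) = 1)) hv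
    · exact hone v w h hw2 hv hw1
  -- (0,1), tail circle
  next =>
    obtain ⟨w, hw2, hw1⟩ := htail
    have huniq : ∀ v : Fin n, 2 ≤ v.val → v.val ≠ w.val → c v = 0 := fun v h hne => by
      rcases zmod2cases (c v) with h' | h'
      · exact h'
      · exact absurd (congrArg Fin.val (hone v w h hw2 h' hw1)) hne
    have hc : c = ind (fun x => x = 1 ∨ x = w.val) := by
      funext v
      unfold ind
      split_ifs with h
      · rcases h with h | h
        · rw [show v = ⟨1, h1n⟩ from Fin.ext (show v.val = 1 by omega)]; exact hb
        · rw [show v = w from Fin.ext h]; exact hw1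
      · rcases Nat.lt_or_ge v.val 2 with h' | h'
        · rw [show v = ⟨0, h0n⟩ from Fin.ext (show v.val = 0 by omega)]; exact ha
        · exact huniq v h' (fun hh => h (Or.inr hh))
    obtain ⟨c', hrel, hd⟩ := lemE hn w.val hw2 w.isLt ⟨1, h1n⟩ ⟨0, h0n⟩ (Or.inr ⟨rfl, rfl⟩)
    refine ⟨c', ?_, hd⟩
    rw [hc]
    exact hrel
  -- (0,1), empty tail
  next =>
    push_neg at htail
    have hz : ∀ v : Fin n, 2 ≤ v.val → c v = 0 := fun v h => by
      rcases zmod2cases (c v) with h' | h'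
      · exact h'
      · exact absurd h' (htail v h)
    refine ⟨c, Relation.ReflTransGen.refl, ⟨1, h1n⟩, fun v hv => Fin.ext ?_⟩
    have hvlt := v.isLt
    by_contra hne
    rcases Nat.lt_or_ge v.val 2 with h | h
    · rcases Nat.lt_or_ge v.val 1 with h' | h'
      · rw [show v = ⟨0, h0n⟩ from Fin.ext (show v.val = 0 by omega), ha] at hv
        exact (by decide : ¬ ((0 : ZMod 2) = 1)) hv
      · exact hne (show v.val = 1 by omega)
    · rw [hz v h] at hv
      exact (by decide : ¬ ((0 : ZMod 2) = 1)) hv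
  -- (1,0), tail circle
  next =>
    obtain ⟨w, hw2, hw1⟩ := htail
    have huniq : ∀ v : Fin n, 2 ≤ v.val → v.val ≠ w.val → c v = 0 := fun v h hne => by
      rcases zmod2cases (c v) with h' | h'
      · exact h'
      · exact absurd (congrArg Fin.val (hone v w h hw2 h' hw1)) hne
    have hc : c = ind (fun x => x = 0 ∨ x = w.val) := by
      funext v
      unfold ind
      split_ifs with h
      · rcases h with h | h
        · rw [show v = ⟨0, h0n⟩ from Fin.ext (show v.val = 0 by omega)]; exact ha
        · rw [show v = w from Fin.ext h]; exact hw1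
      · rcases Nat.lt_or_ge v.val 2 with h' | h'
        · rw [show v = ⟨1, h1n⟩ from Fin.ext (show v.val = 1 by omega)]; exact hb
        · exact huniq v h' (fun hh => h (Or.inr hh))
    obtain ⟨c', hrel, hd⟩ := lemE hn w.val hw2 w.isLt ⟨0, h0n⟩ ⟨1, h1n⟩ (Or.inl ⟨rfl, rfl⟩)
    refine ⟨c', ?_, hd⟩
    rw [hc]
    exact hrel
  -- (1,0), empty tail
  next =>
    push_neg at htail
    have hz : ∀ v : Fin n, 2 ≤ v.val → c v = 0 := fun v h => by
      rcases zmod2cases (c v) with h' | h'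
      · exact h'
      · exact absurd h' (htail v h)
    refine ⟨c, Relation.ReflTransGen.refl, ⟨0, h0n⟩, fun v hv => Fin.ext ?_⟩
    have hvlt := v.isLt
    by_contra hne
    rcases Nat.lt_or_ge v.val 2 with h | h
    · rcases Nat.lt_or_ge v.val 1 with h' | h'
      · exact hne (show v.val = 0 by omega)
      · rw [show v = ⟨1, h1n⟩ from Fin.ext (show v.val = 1 by omega), hb] at hv
        exact (by decide : ¬ ((0 : ZMod 2) = 1)) hv
    · rw [hz v h] at hv
      exact (by decide : ¬ ((0 : ZMod 2) = 1)) hv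
  -- (1,1), tail circle
  next =>
    obtain ⟨w, hw2, hw1⟩ := htail
    have huniq : ∀ v : Fin n, 2 ≤ v.val → v.val ≠ w.val → c v = 0 := fun v h hne => by
      rcases zmod2cases (c v) with h' | h'
      · exact h'
      · exact absurd (congrArg Fin.val (hone v w h hw2 h' hw1)) hne
    rcases Nat.lt_or_ge w.val 3 with h3 | h3
    · -- w.val = 2
      have hc : c = ind (fun x => x ≤ 2) := by
        funext v
        unfold ind
        split_ifs with h
        · rcases Nat.lt_or_ge v.val 1 with h' | h'
          · rw [show v = ⟨0, h0n⟩ from Fin.ext (show v.val = 0 by omega)]; exact ha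
          · rcases Nat.lt_or_ge v.val 2 with h'' | h''
            · rw [show v = ⟨1, h1n⟩ from Fin.ext (show v.val = 1 by omega)]; exact hb
            · rw [show v = w from Fin.ext (show v.val = w.val by omega)]; exact hw1
        · exact huniq v (by omega) (by omega)
      have s2 := frel_push_two h2n (fun x => x ≤ 2) (show (2:ℕ) ≤ 2 by omega)
      have s2' := frel_ind_congr (fun x => x = 2 ∨ x = 3) s2 (fun x hx => by omega)
      have s3 := slideB_ind (n - 4) 2 (fun x => x = 2 ∨ x = 3) (by omega)
        (show 2 + 1 + (n - 4) = n - 1 by omega) (by omega) (by omega) (by omega)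
        (fun l hl => by omega)
      have s3' := frel_ind_congr (fun x => x = n - 1) s3 (fun x hx => by omega)
      refine ⟨_, ?_, done_ind (fun x => x = n - 1) (n - 1) (by omega)
        (fun x hx hQ => hQ)⟩
      rw [hc]
      exact frel_trans s2' s3'
    · rcases Nat.lt_or_ge w.val 4 with h4 | h4
      · -- w.val = 3
        have hc : c = ind (fun x => x ≤ 1 ∨ x = 3) := by
          funext v
          unfold ind
          split_ifs with h
          · rcases Nat.lt_or_ge v.val 1 with h' | h'
            · rw [show v = ⟨0, h0n⟩ from Fin.ext (show v.val = 0 by omega)]; exact ha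
            · rcases Nat.lt_or_ge v.val 2 with h'' | h''
              · rw [show v = ⟨1, h1n⟩ from Fin.ext (show v.val = 1 by omega)]; exact hb
              · rw [show v = w from Fin.ext (show v.val = w.val by omega)]; exact hw1
          · exact huniq v (by omega) (by omega)
        have s1 := frel_push_fork ⟨0, h0n⟩ (Or.inl rfl) (fun x => x ≤ 1 ∨ x = 3)
          (show (0:ℕ) ≤ 1 ∨ (0:ℕ) = 3 by omega)
        have s1' := frel_ind_congr (fun x => x ≤ 3) s1 (fun x hx => by omega)
        have s2 := frel_push_two h2n (fun x => x ≤ 3) (show (2:ℕ) ≤ 3 by omega)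
        have s2' := frel_ind_congr (fun x => x = 2) s2 (fun x hx => by omega)
        refine ⟨_, ?_, done_ind (fun x => x = 2) 2 h2n (fun x hx hQ => hQ)⟩
        rw [hc]
        exact frel_trans s1' s2'
      · -- w.val ≥ 4
        have hc : c = ind (fun x => x ≤ 1 ∨ x = w.val) := by
          funext v
          unfold ind
          split_ifs with h
          · rcases h with h | h
            · rcases Nat.lt_or_ge v.val 1 with h' | h'
              · rw [show v = ⟨0, h0n⟩ from Fin.ext (show v.val = 0 by omega)]; exact ha
              · rw [show v = ⟨1, h1n⟩ from Fin.ext (show v.val = 1 by omega)]; exact hb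
            · rw [show v = w from Fin.ext h]; exact hw1
          · exact huniq v (by have := v.isLt; omega) (fun hh => h (Or.inr hh))
        have s1 := frel_push_fork ⟨0, h0n⟩ (Or.inl rfl) (fun x => x ≤ 1 ∨ x = w.val)
          (show (0:ℕ) ≤ 1 ∨ (0:ℕ) = w.val by omega)
        have s1' := frel_ind_congr (fun x => x ≤ 2 ∨ x = w.val) s1 (fun x hx => by omega)
        have s2 := frel_push_two h2n (fun x => x ≤ 2 ∨ x = w.val)
          (show (2:ℕ) ≤ 2 ∨ (2:ℕ) = w.val by omega)
        have s2' := frel_ind_congr (fun x => x = 2 ∨ x = 3 ∨ x = w.val) s2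
          (fun x hx => by omega)
        have s3 := slideA_ind (w.val - 4) 2 w.val (fun x => x = 2 ∨ x = 3 ∨ x = w.val)
          (by omega) (show w.val = 2 + 2 + (w.val - 4) by omega) w.isLt (by omega)
          (by omega) (fun l h1 h2 => by omega) (by omega)
        have s3' := frel_ind_congr (fun x => x = w.val - 1) s3 (fun x hx => by omega)
        refine ⟨_, ?_, done_ind (fun x => x = w.val - 1) (w.val - 1) (by omega)
          (fun x hx hQ => hQ)⟩
        rw [hc]
        exact frel_trans s1' (frel_trans s2' s3')
  -- (1,1), empty tail
  next =>
    push_neg at htail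
    have hz : ∀ v : Fin n, 2 ≤ v.val → c v = 0 := fun v h => by
      rcases zmod2cases (c v) with h' | h'
      · exact h'
      · exact absurd h' (htail v h)
    have hc : c = ind (fun x => x ≤ 1) := by
      funext v
      unfold ind
      split_ifs with h
      · rcases Nat.lt_or_ge v.val 1 with h' | h'
        · rw [show v = ⟨0, h0n⟩ from Fin.ext (show v.val = 0 by omega)]; exact ha
        · rw [show v = ⟨1, h1n⟩ from Fin.ext (show v.val = 1 by omega)]; exact hb
      · exact hz v (by omega)
    have s1 := frel_push_fork ⟨0, h0n⟩ (Or.inl rfl) (fun x => x ≤ 1)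
      (show (0:ℕ) ≤ 1 by omega)
    have s1' := frel_ind_congr (fun x => x ≤ 2) s1 (fun x hx => by omega)
    have s2 := frel_push_two h2n (fun x => x ≤ 2) (show (2:ℕ) ≤ 2 by omega)
    have s2' := frel_ind_congr (fun x => x = 2 ∨ x = 3) s2 (fun x hx => by omega)
    have s3 := slideB_ind (n - 4) 2 (fun x => x = 2 ∨ x = 3) (by omega)
      (show 2 + 1 + (n - 4) = n - 1 by omega) (by omega) (by omega) (by omega)
      (fun l hl => by omega)
    have s3' := frel_ind_congr (fun x => x = n - 1) s3 (fun x hx => by omega)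
    refine ⟨_, ?_, done_ind (fun x => x = n - 1) (n - 1) (by omega)
      (fun x hx hQ => hQ)⟩
    rw [hc]
    exact frel_trans s1' (frel_trans s2' s3')

def tailSet (c : Fin n → ZMod 2) : Finset (Fin n) :=
  Finset.univ.filter fun v => 2 ≤ v.val ∧ c v = 1

lemma mem_tailSet {c : Fin n → ZMod 2} {v : Fin n} :
    v ∈ tailSet c ↔ 2 ≤ v.val ∧ c v = 1 := by
  simp [tailSet]

def tailCard (c : Fin n → ZMod 2) : ℕ := (tailSet c).card

lemma atMostOneTail_of (c : Fin n → ZMod 2) (h : tailCard c ≤ 1) : AtMostOneTail c :=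
  fun v w hv2 hw2 hv hw =>
    Finset.card_le_one.1 h v (mem_tailSet.2 ⟨hv2, hv⟩) w (mem_tailSet.2 ⟨hw2, hw⟩)

lemma phase1 (hn : 4 ≤ n) : ∀ k (c : Fin n → ZMod 2), tailCard c ≤ k →
    ∃ c', FRelated (dynkinD n) c c' ∧ AtMostOneTail c' := by
  intro k
  induction k with
  | zero => exact fun c hc => ⟨c, Relation.ReflTransGen.refl, atMostOneTail_of c (by omega)⟩
  | succ k ihk =>
    have H : ∀ ℓ (c : Fin n → ZMod 2), tailCard c ≤ k + 1 → ∀ hℓn : ℓ < n, 2 ≤ ℓ →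
        c ⟨ℓ, hℓn⟩ = 1 → (∀ l (hl : l < n), 2 ≤ l → l < ℓ → c ⟨l, hl⟩ = 0) →
        ∃ c', FRelated (dynkinD n) c c' ∧ AtMostOneTail c' := by
      intro ℓ
      induction ℓ using Nat.strong_induction_on with
      | _ ℓ ihℓ =>
      intro c hc hℓn hℓ2 hcℓ hz
      by_cases h1 : tailCard c ≤ 1
      · exact ⟨c, Relation.ReflTransGen.refl, atMostOneTail_of c h1⟩
      obtain ⟨w, hwS', hwne⟩ := Finset.exists_mem_ne
        (show 1 < (tailSet c).card by unfold tailCard at h1; omega) ⟨ℓ, hℓn⟩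
      have hwS := mem_tailSet.1 hwS'
      have hwℓ : ℓ < w.val := by
        rcases Nat.lt_trichotomy w.val ℓ with h | h | h
        · have h0 : c w = 0 := hz w.val w.isLt hwS.1 h
          rw [h0] at hwS
          exact absurd hwS.2 (by decide)
        · exact absurd (Fin.ext h) hwne
        · exact h
      have hr1n : ℓ + 1 < n := by omega
      rcases zmod2cases (c ⟨ℓ + 1, hr1n⟩) with hp0 | hp1
      · -- no pair: the second circle is at distance ≥ 2
        set T := (tailSet c).filter (fun v => ℓ < v.val) with hT
        have hTne : T.Nonempty :=
          ⟨w, by rw [hT, Finset.mem_filter]; exact ⟨hwS', hwℓ⟩⟩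
        set rf := T.min' hTne with hrfdef
        have hrT : rf ∈ T := T.min'_mem hTne
        have hrS : 2 ≤ rf.val ∧ c rf = 1 := mem_tailSet.1 (Finset.mem_filter.1 hrT).1
        have hrS' : rf ∈ tailSet c := (Finset.mem_filter.1 hrT).1
        have hℓr : ℓ < rf.val := (Finset.mem_filter.1 hrT).2
        have hbet : ∀ l (hl : l < n), ℓ < l → l < rf.val → c ⟨l, hl⟩ = 0 := by
          intro l hl hl1 hl2
          rcases zmod2cases (c ⟨l, hl⟩) with h' | h'
          · exact h'
          · exfalso
            have hmem : (⟨l, hl⟩ : Fin n) ∈ T := by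
              rw [hT, Finset.mem_filter, mem_tailSet]
              exact ⟨⟨show 2 ≤ l by omega, h'⟩, hl1⟩
            have := T.min'_le _ hmem
            rw [Fin.le_def] at this
            simp only [Fin.val_mk] at this
            omega
        have hrℓ2 : ℓ + 2 ≤ rf.val := by
          by_cases hq : rf.val = ℓ + 1
          · exfalso
            have := hrS.2
            rw [show rf = ⟨ℓ + 1, hr1n⟩ from Fin.ext hq, hp0] at this
            exact absurd this (by decide)
          · omega
        rcases eq_or_lt_of_le hℓ2 with hℓeq | hℓ3
        · -- leftmost tail circle at vertex 2 : push 2 and slide into rf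
          subst hℓeq
          set c1 := push (dynkinD n) ⟨2, hℓn⟩ c with hc1def
          have hc1 : ∀ v : Fin n, c1 v =
              if v.val = 0 ∨ v.val = 1 ∨ v.val = 3 then c v + 1 else c v :=
            fun v => push_two ⟨2, hℓn⟩ rfl c v
          obtain ⟨c2, hrel2, hform⟩ := slideA (rf.val - 4) 2 rf.val c1 (le_refl 2)
            (by omega) rf.isLt
            (fun hj => by
              rw [hc1 ⟨2, hj⟩]; simp only [Fin.val_mk]
              rw [if_neg (by omega)]; exact hcℓ)
            (fun h1' => by
              rw [hc1 ⟨3, h1'⟩]; simp only [Fin.val_mk]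
              rw [if_pos (Or.inr (Or.inr trivial)), show c ⟨3, h1'⟩ = 0 from hp0]; decide)
            (fun l hl hl1 hl2 => by
              rw [hc1 ⟨l, hl⟩]; simp only [Fin.val_mk]
              rw [if_neg (by omega)]; exact hbet l hl (by omega) hl2)
            (fun hr => by
              rw [hc1 ⟨rf.val, hr⟩]; simp only [Fin.val_mk]
              rw [if_neg (by omega)]; exact hrS.2)
          have hsub : tailSet c2 ⊆
              insert ⟨rf.val - 1, by omega⟩ (((tailSet c).erase ⟨2, hℓn⟩).erase rf) := by
            intro v hv
            obtain ⟨hv2, hv1⟩ := mem_tailSet.1 hv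
            rw [hform v] at hv1
            by_cases hin : 2 ≤ v.val ∧ v.val ≤ rf.val
            · rw [if_pos hin] at hv1
              by_cases he : v.val = rf.val - 1
              · exact Finset.mem_insert.2 (Or.inl (Fin.ext (show v.val = rf.val - 1 from he)))
              · rw [if_neg he] at hv1; exact absurd hv1 (by decide)
            · rw [if_neg hin] at hv1
              have hvr : rf.val < v.val := by omega
              rw [hc1 v, if_neg (by omega)] at hv1
              refine Finset.mem_insert.2 (Or.inr (Finset.mem_erase.2
                ⟨Fin.ne_of_val_ne (by first | omega | (simp only [Fin.val_mk]; omega)), Finset.mem_erase.2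
                  ⟨Fin.ne_of_val_ne (by first | omega | (simp only [Fin.val_mk]; omega)), mem_tailSet.2 ⟨hv2, hv1⟩⟩⟩))
          have hcard : tailCard c2 ≤ k := by
            have hb1 := Finset.card_le_card hsub
            have hb2 := Finset.card_insert_le (⟨rf.val - 1, by omega⟩ : Fin n)
              (((tailSet c).erase ⟨2, hℓn⟩).erase rf)
            have e1 : ((tailSet c).erase ⟨2, hℓn⟩).card = (tailSet c).card - 1 :=
              Finset.card_erase_of_mem (mem_tailSet.2 ⟨show (2:ℕ) ≤ 2 by omega, hcℓ⟩)
            have e2 : (((tailSet c).erase ⟨2, hℓn⟩).erase rf).card =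
                ((tailSet c).erase ⟨2, hℓn⟩).card - 1 :=
              Finset.card_erase_of_mem (Finset.mem_erase.2
                ⟨Fin.ne_of_val_ne (by first | omega | (simp only [Fin.val_mk]; omega)), hrS'⟩)
            unfold tailCard at hc h1 ⊢
            omega
          obtain ⟨c', hrel', hone'⟩ := ihk c2 hcard
          exact ⟨c', frel_trans (frel_trans (frel_push _ _ _ hcℓ) hrel2) hrel', hone'⟩
        · -- leftmost tail circle at ℓ ≥ 3 : push ℓ and slide into rf; leftmost moves left
          set c1 := push (dynkinD n) ⟨ℓ, hℓn⟩ c with hc1def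
          have hc1 : ∀ v : Fin n, c1 v =
              if v.val + 1 = ℓ ∨ v.val = ℓ + 1 then c v + 1 else c v :=
            fun v => push_mid ⟨ℓ, hℓn⟩ (show 3 ≤ ℓ by omega) c v
          obtain ⟨c2, hrel2, hform⟩ := slideA (rf.val - (ℓ + 2)) ℓ rf.val c1 hℓ2
            (by omega) rf.isLt
            (fun hj => by
              rw [hc1 ⟨ℓ, hj⟩]; simp only [Fin.val_mk]
              rw [if_neg (by omega)]; exact hcℓ)
            (fun h1' => by
              rw [hc1 ⟨ℓ + 1, h1'⟩]; simp only [Fin.val_mk]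
              rw [if_pos (Or.inr trivial), show c ⟨ℓ + 1, h1'⟩ = 0 from hp0]; decide)
            (fun l hl hl1 hl2 => by
              rw [hc1 ⟨l, hl⟩]; simp only [Fin.val_mk]
              rw [if_neg (by omega)]; exact hbet l hl (by omega) hl2)
            (fun hr => by
              rw [hc1 ⟨rf.val, hr⟩]; simp only [Fin.val_mk]
              rw [if_neg (by omega)]; exact hrS.2)
          have hc2l : c2 ⟨ℓ - 1, by omega⟩ = 1 := by
            rw [hform ⟨ℓ - 1, by omega⟩]; simp only [Fin.val_mk]
            rw [if_neg (by omega), hc1 ⟨ℓ - 1, by omega⟩]; simp only [Fin.val_mk]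
            rw [if_pos (by omega), hz (ℓ - 1) (by omega) (by omega) (by omega)]
            decide
          have hz2 : ∀ l (hl : l < n), 2 ≤ l → l < ℓ - 1 → c2 ⟨l, hl⟩ = 0 := by
            intro l hl hl1 hl2
            rw [hform ⟨l, hl⟩]; simp only [Fin.val_mk]
            rw [if_neg (by omega), hc1 ⟨l, hl⟩]; simp only [Fin.val_mk]
            rw [if_neg (by omega)]
            exact hz l hl hl1 (by omega)
          have hsub : tailSet c2 ⊆ insert ⟨ℓ - 1, by omega⟩ (insert ⟨rf.val - 1, by omega⟩
              (((tailSet c).erase ⟨ℓ, hℓn⟩).erase rf)) := by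
            intro v hv
            obtain ⟨hv2, hv1⟩ := mem_tailSet.1 hv
            rw [hform v] at hv1
            by_cases hin : ℓ ≤ v.val ∧ v.val ≤ rf.val
            · rw [if_pos hin] at hv1
              by_cases he : v.val = rf.val - 1
              · exact Finset.mem_insert.2 (Or.inr (Finset.mem_insert.2 (Or.inl
                  (Fin.ext (show v.val = rf.val - 1 from he)))))
              · rw [if_neg he] at hv1; exact absurd hv1 (by decide)
            · rw [if_neg hin] at hv1
              rw [hc1 v] at hv1
              by_cases he : v.val + 1 = ℓ ∨ v.val = ℓ + 1
              · have he2 : v.val = ℓ - 1 := by omega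
                exact Finset.mem_insert.2 (Or.inl (Fin.ext (show v.val = ℓ - 1 from he2)))
              · rw [if_neg he] at hv1
                have hvs : v.val < ℓ - 1 ∨ rf.val < v.val := by omega
                rcases hvs with hvs | hvs
                · exact absurd hv1 (by rw [show v = ⟨v.val, v.isLt⟩ from rfl,
                    hz v.val v.isLt hv2 (by omega)]; decide)
                · exact Finset.mem_insert.2 (Or.inr (Finset.mem_insert.2 (Or.inr
                    (Finset.mem_erase.2 ⟨Fin.ne_of_val_ne (by first | omega | (simp only [Fin.val_mk]; omega)),
                      Finset.mem_erase.2 ⟨Fin.ne_of_val_ne (by first | omega | (simp only [Fin.val_mk]; omega)),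
                        mem_tailSet.2 ⟨hv2, hv1⟩⟩⟩))))
          have hcard : tailCard c2 ≤ k + 1 := by
            have hb1 := Finset.card_le_card hsub
            have hb2 := Finset.card_insert_le (⟨ℓ - 1, by omega⟩ : Fin n)
              (insert ⟨rf.val - 1, by omega⟩ (((tailSet c).erase ⟨ℓ, hℓn⟩).erase rf))
            have hb3 := Finset.card_insert_le (⟨rf.val - 1, by omega⟩ : Fin n)
              (((tailSet c).erase ⟨ℓ, hℓn⟩).erase rf)
            have e1 : ((tailSet c).erase ⟨ℓ, hℓn⟩).card = (tailSet c).card - 1 :=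
              Finset.card_erase_of_mem (mem_tailSet.2 ⟨show 2 ≤ ℓ by omega, hcℓ⟩)
            have e2 : (((tailSet c).erase ⟨ℓ, hℓn⟩).erase rf).card =
                ((tailSet c).erase ⟨ℓ, hℓn⟩).card - 1 :=
              Finset.card_erase_of_mem (Finset.mem_erase.2
                ⟨Fin.ne_of_val_ne (by first | omega | (simp only [Fin.val_mk]; omega)), hrS'⟩)
            unfold tailCard at hc h1 ⊢
            omega
          obtain ⟨c', hrel', hone'⟩ := ihℓ (ℓ - 1) (by omega) c2 hcard (by omega)
            (by omega) hc2l hz2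
          exact ⟨c', frel_trans (frel_trans (frel_push _ _ _ hcℓ) hrel2) hrel', hone'⟩
      · -- pair at (ℓ, ℓ+1)
        set U := (tailSet c).filter (fun v => ℓ + 1 < v.val) with hU
        by_cases hUne : U.Nonempty
        · -- a circle beyond the pair : slide the pair into it
          set sf := U.min' hUne with hsfdef
          have hsT : sf ∈ U := U.min'_mem hUne
          have hsS : 2 ≤ sf.val ∧ c sf = 1 := mem_tailSet.1 (Finset.mem_filter.1 hsT).1
          have hsS' : sf ∈ tailSet c := (Finset.mem_filter.1 hsT).1
          have hs1 : ℓ + 1 < sf.val := (Finset.mem_filter.1 hsT).2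
          have hbets : ∀ l (hl : l < n), ℓ + 1 < l → l < sf.val → c ⟨l, hl⟩ = 0 := by
            intro l hl hl1 hl2
            rcases zmod2cases (c ⟨l, hl⟩) with h' | h'
            · exact h'
            · exfalso
              have hmem : (⟨l, hl⟩ : Fin n) ∈ U := by
                rw [hU, Finset.mem_filter, mem_tailSet]
                exact ⟨⟨show 2 ≤ l by omega, h'⟩, hl1⟩
              have := U.min'_le _ hmem
              rw [Fin.le_def] at this
              simp only [Fin.val_mk] at this
              omega
          obtain ⟨c2, hrel2, hform⟩ := slideA (sf.val - (ℓ + 2)) ℓ sf.val c hℓ2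
            (by omega) sf.isLt (fun hj => hcℓ) (fun h1' => hp1) hbets
            (fun hr => hsS.2)
          have hsub : tailSet c2 ⊆ insert ⟨sf.val - 1, by omega⟩
              ((((tailSet c).erase ⟨ℓ, hℓn⟩).erase ⟨ℓ + 1, hr1n⟩).erase sf) := by
            intro v hv
            obtain ⟨hv2, hv1⟩ := mem_tailSet.1 hv
            rw [hform v] at hv1
            by_cases hin : ℓ ≤ v.val ∧ v.val ≤ sf.val
            · rw [if_pos hin] at hv1
              by_cases he : v.val = sf.val - 1
              · exact Finset.mem_insert.2 (Or.inl (Fin.ext (show v.val = sf.val - 1 from he)))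
              · rw [if_neg he] at hv1; exact absurd hv1 (by decide)
            · rw [if_neg hin] at hv1
              have hvs : v.val < ℓ ∨ sf.val < v.val := by omega
              rcases hvs with hvs | hvs
              · exact absurd hv1 (by rw [show v = ⟨v.val, v.isLt⟩ from rfl,
                  hz v.val v.isLt hv2 hvs]; decide)
              · exact Finset.mem_insert.2 (Or.inr (Finset.mem_erase.2
                  ⟨Fin.ne_of_val_ne (by first | omega | (simp only [Fin.val_mk]; omega)), Finset.mem_erase.2
                    ⟨Fin.ne_of_val_ne (by first | omega | (simp only [Fin.val_mk]; omega)), Finset.mem_erase.2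
                      ⟨Fin.ne_of_val_ne (by first | omega | (simp only [Fin.val_mk]; omega)), mem_tailSet.2 ⟨hv2, hv1⟩⟩⟩⟩))
          have hcard : tailCard c2 ≤ k := by
            have hb1 := Finset.card_le_card hsub
            have hb2 := Finset.card_insert_le (⟨sf.val - 1, by omega⟩ : Fin n)
              ((((tailSet c).erase ⟨ℓ, hℓn⟩).erase ⟨ℓ + 1, hr1n⟩).erase sf)
            have e1 : ((tailSet c).erase ⟨ℓ, hℓn⟩).card = (tailSet c).card - 1 :=
              Finset.card_erase_of_mem (mem_tailSet.2 ⟨show 2 ≤ ℓ by omega, hcℓ⟩)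
            have e2 : (((tailSet c).erase ⟨ℓ, hℓn⟩).erase ⟨ℓ + 1, hr1n⟩).card =
                ((tailSet c).erase ⟨ℓ, hℓn⟩).card - 1 :=
              Finset.card_erase_of_mem (Finset.mem_erase.2
                ⟨Fin.ne_of_val_ne (by first | omega | (simp only [Fin.val_mk]; omega)), mem_tailSet.2 ⟨show 2 ≤ ℓ + 1 by omega, hp1⟩⟩)
            have e3 : ((((tailSet c).erase ⟨ℓ, hℓn⟩).erase ⟨ℓ + 1, hr1n⟩).erase sf).card =
                (((tailSet c).erase ⟨ℓ, hℓn⟩).erase ⟨ℓ + 1, hr1n⟩).card - 1 :=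
              Finset.card_erase_of_mem (Finset.mem_erase.2
                ⟨Fin.ne_of_val_ne (by first | omega | (simp only [Fin.val_mk]; omega)), Finset.mem_erase.2
                  ⟨Fin.ne_of_val_ne (by first | omega | (simp only [Fin.val_mk]; omega)), hsS'⟩⟩)
            unfold tailCard at hc h1 ⊢
            omega
          obtain ⟨c', hrel', hone'⟩ := ihk c2 hcard
          exact ⟨c', frel_trans hrel2 hrel', hone'⟩
        · -- nothing beyond the pair : slide it off the right end
          have hbig : ∀ l (hl : l < n), ℓ + 1 < l → c ⟨l, hl⟩ = 0 := by
            intro l hl hl1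
            rcases zmod2cases (c ⟨l, hl⟩) with h' | h'
            · exact h'
            · exact absurd ⟨⟨l, hl⟩, by
                rw [hU, Finset.mem_filter, mem_tailSet]
                exact ⟨⟨show 2 ≤ l by omega, h'⟩, hl1⟩⟩ hUne
          obtain ⟨c2, hrel2, hform⟩ := slideB (n - 1 - (ℓ + 1)) ℓ c hℓ2 (by omega) hr1n
            (fun hj => hcℓ) (fun h1' => hp1) hbig
          refine ⟨c2, hrel2, ?_⟩
          have hkey : ∀ u : Fin n, 2 ≤ u.val → c2 u = 1 → u.val = n - 1 := by
            intro u hu2 hu1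
            rw [hform u] at hu1
            by_cases h : ℓ ≤ u.val
            · rw [if_pos h] at hu1
              by_cases he : u.val = n - 1
              · exact he
              · rw [if_neg he] at hu1; exact absurd hu1 (by decide)
            · rw [if_neg h] at hu1
              exfalso
              rw [show u = ⟨u.val, u.isLt⟩ from rfl, hz u.val u.isLt hu2 (by omega)] at hu1
              exact absurd hu1 (by decide)
          exact fun v v' hv2 hv'2 hv1 hv'1 =>
            Fin.ext (by rw [hkey v hv2 hv1, hkey v' hv'2 hv'1])
    intro c hc
    by_cases h1 : tailCard c ≤ 1
    · exact ⟨c, Relation.ReflTransGen.refl, atMostOneTail_of c h1⟩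
    · have hne : (tailSet c).Nonempty :=
        Finset.card_pos.1 (by unfold tailCard at h1; omega)
      have hwS := mem_tailSet.1 ((tailSet c).min'_mem hne)
      refine H ((tailSet c).min' hne).val c hc ((tailSet c).min' hne).isLt hwS.1 hwS.2 ?_
      intro l hl hl1 hl2
      rcases zmod2cases (c ⟨l, hl⟩) with h' | h'
      · exact h'
      · exfalso
        have := (tailSet c).min'_le _ (mem_tailSet.2 ⟨hl1, h'⟩)
        rw [Fin.le_def] at this
        simp only [Fin.val_mk] at this
        omega

end DynD

/-- Push-the-button algorithm for type `D`: every circling on the Dynkin diagram of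
type `D n` (`n ≥ 4`) is `F`-related to one with at most one circled vertex. -/
theorem fRelated_ncard_le_one_dynkinD (n : ℕ) (hn : 4 ≤ n) (c : Fin n → ZMod 2) :
    ∃ c' : Fin n → ZMod 2, FRelated (dynkinD n) c c' ∧ {v | c' v = 1}.ncard ≤ 1 := by
  obtain ⟨c₁, h₁, hone⟩ := DynD.phase1 hn (DynD.tailCard c) c le_rfl
  obtain ⟨c₂, h₂, hd⟩ := DynD.phase2 hn c₁ hone
  obtain ⟨x, hx⟩ := hd
  refine ⟨c₂, DynD.frel_trans h₁ h₂, ?_⟩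
  have hs : {v | c₂ v = 1} ⊆ {x} := fun v hv => hx v hv
  calc ({v | c₂ v = 1}).ncard ≤ ({x} : Set (Fin n)).ncard :=
        Set.ncard_le_ncard hs (Set.finite_singleton x)
    _ = 1 := Set.ncard_singleton x
end
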